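/- arXiv:1612.09117 — 4 statements merged into one kernel-verified Lean document; each statement's English description precedes it below -/
import Mathlib

section
/- Let 1<p<∞, let u_E be the capacitary potential of a set E in a bounded open set Ω (so ∫_Ω g_E^p dμ = cap_p(E,Ω) < ∞), and for 0<M<1 let E_M = {x ∈ Ω : u_E(x) > M}. Then cap_p(E_M, Ω) = M^{1-p} cap_p(E, Ω). -/
open MeasureTheory Metric Set
open scoped ENNReal NNReal

/-- `g` is a (genuine) upper gradient of `u`: along every rectifiable curve,
parameterized by arc length as a `1`-Lipschitz map on `[0,L]`, the fundamental
theorem of calculus estimate holds. -/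
def IsUpperGradient {X : Type*} [MetricSpace X] (u : X → ℝ) (g : X → ℝ) : Prop :=
  ∀ (L : ℝ) (γ : ℝ → X), 0 ≤ L → LipschitzOnWith 1 γ (Set.Icc 0 L) →
    |u (γ L) - u (γ 0)| ≤ ∫ t in (0:ℝ)..L, g (γ t)

/-- The variational `p`-capacity of `E` inside the open set `Ω`. -/
noncomputable def varCap {X : Type*} [MetricSpace X] [MeasurableSpace X] (p : ℝ)
    (μ : Measure X) (E Ω : Set X) : ℝ≥0∞ :=
  ⨅ (u : X → ℝ) (_ : (∀ x ∈ E, u x = 1) ∧ ∀ x ∉ Ω, u x = 0)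
    (g : X → ℝ) (_ : IsUpperGradient u g ∧ ∀ x, 0 ≤ g x),
      ∫⁻ x in Ω, ENNReal.ofReal (g x ^ p) ∂μ

/-- The measure `μ` is doubling (and nondegenerate on balls). -/
def IsDoubling {X : Type*} [MetricSpace X] [MeasurableSpace X] (μ : Measure X) : Prop :=
  ∃ C : ℝ≥0∞, ∀ (x : X) (r : ℝ), 0 < r →
    0 < μ (ball x r) ∧ μ (ball x r) < ⊤ ∧ μ (ball x (2*r)) ≤ C * μ (ball x r)

/-- `X` supports a `p`-Poincaré inequality. -/
def SupportsPoincare {X : Type*} [MetricSpace X] [MeasurableSpace X] (p : ℝ)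
    (μ : Measure X) : Prop :=
  ∃ (C lam : ℝ), 0 < C ∧ 1 ≤ lam ∧
    ∀ (x : X) (r : ℝ), 0 < r → ∀ f g : X → ℝ, IsUpperGradient f g → (∀ y, 0 ≤ g y) →
      ⨍ y in ball x r, |f y - ⨍ z in ball x r, f z ∂μ| ∂μ ≤
        C * (2*r) * (⨍ y in ball x (lam*r), g y ^ p ∂μ) ^ (1/p)

namespace SuperlevelAux

/-- interval integral of a everywhere-nonneg function is nonneg even without
integrability (junk value 0). -/
lemma intnonneg {L : ℝ} (hL : 0 ≤ L) {f : ℝ → ℝ} (hf : ∀ t, 0 ≤ f t) :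
    0 ≤ ∫ t in (0:ℝ)..L, f t :=
  intervalIntegral.integral_nonneg hL (fun t _ => hf t)

/-- 1-Lipschitz of `min · c`. -/
lemma lip_min (a b c : ℝ) : |min a c - min b c| ≤ |a - b| := by
  rcases le_total a b with h | h <;> rcases le_total a c with h1 | h1 <;>
    rcases le_total b c with h2 | h2 <;>
    simp [min_eq_left, min_eq_right, h1, h2, abs_le] <;> constructor <;> try linarith
  all_goals linarith [abs_nonneg (a - b), le_abs_self (a - b), neg_abs_le (a - b)]

/-- 1-Lipschitz of `max (· - c) 0`. -/
lemma lip_pos (a b c : ℝ) : |max (a - c) 0 - max (b - c) 0| ≤ |a - b| := by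
  rcases le_total a c with h1 | h1 <;> rcases le_total b c with h2 | h2 <;>
    simp [max_eq_left, max_eq_right, sub_nonpos.mpr, sub_nonneg.mpr, h1, h2, abs_le] <;>
    constructor <;> try linarith
  all_goals linarith [le_abs_self (a - b), neg_abs_le (a - b)]

/-- subcurve estimate from the upper gradient inequality. -/
lemma subcurve {X : Type*} [MetricSpace X] {u g : X → ℝ} (hug : IsUpperGradient u g)
    {L : ℝ} {γ : ℝ → X} (hγ : LipschitzOnWith 1 γ (Set.Icc 0 L))
    {s t : ℝ} (hs : 0 ≤ s) (hst : s ≤ t) (htL : t ≤ L) :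
    |u (γ t) - u (γ s)| ≤ ∫ τ in s..t, g (γ τ) := by
  have h0 : (0:ℝ) ≤ t - s := sub_nonneg.mpr hst
  have hγ' : LipschitzOnWith 1 (fun τ => γ (s + τ)) (Set.Icc 0 (t - s)) := by
    intro a ha b hb
    have ha' : s + a ∈ Set.Icc 0 L :=
      ⟨by linarith [ha.1], by linarith [ha.2]⟩
    have hb' : s + b ∈ Set.Icc 0 L :=
      ⟨by linarith [hb.1], by linarith [hb.2]⟩
    simpa [edist_add_left] using hγ ha' hb'
  have := hug (t - s) _ h0 hγ'
  simp only [add_zero] at this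
  rw [add_sub_cancel] at this
  have heq : (∫ τ in (0:ℝ)..(t-s), g (γ (s + τ))) = ∫ τ in s..t, g (γ τ) := by
    have := intervalIntegral.integral_comp_add_left (a := (0:ℝ)) (b := t - s)
      (f := fun τ => g (γ τ)) s
    simpa [add_sub_cancel] using this
  rwa [heq] at this



/-- continuity of a function dominated by an integrable modulus. -/
lemma cont_of_bd {L : ℝ} {h ψ : ℝ → ℝ} (hL : 0 ≤ L)
    (hint : IntervalIntegrable ψ volume 0 L)
    (hbd : ∀ s t, 0 ≤ s → s ≤ t → t ≤ L → |h t - h s| ≤ ∫ τ in s..t, ψ τ) :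
    ContinuousOn h (Set.Icc 0 L) := by
  have hP : ContinuousOn (fun t => ∫ τ in (0:ℝ)..t, ψ τ) (Set.Icc 0 L) := by
    have := intervalIntegral.continuousOn_primitive_interval'
      (f := ψ) (μ := volume) hint (a := 0) (by simp [Set.uIcc_of_le hL, hL])
    rwa [Set.uIcc_of_le hL] at this
  intro t₀ ht₀
  have hPc := hP t₀ ht₀
  rw [Metric.continuousWithinAt_iff] at hPc ⊢
  intro ε hε
  obtain ⟨δ, hδ, hδ'⟩ := hPc ε hε
  refine ⟨δ, hδ, fun {t} ht hd => lt_of_le_of_lt ?_ (hδ' ht hd)⟩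
  set P := fun t => ∫ τ in (0:ℝ)..t, ψ τ with hPdef
  rw [Real.dist_eq, Real.dist_eq]
  rcases le_total t t₀ with hle | hle
  · have hb := hbd t t₀ ht.1 hle ht₀.2
    have hadd : P t + ∫ τ in t..t₀, ψ τ = P t₀ :=
      intervalIntegral.integral_add_adjacent_intervals
        (hint.mono_set (by rw [Set.uIcc_of_le hL, Set.uIcc_of_le ht.1]; exact Set.Icc_subset_Icc le_rfl ht.2))
        (hint.mono_set (by rw [Set.uIcc_of_le hL, Set.uIcc_of_le hle]; exact Set.Icc_subset_Icc ht.1 ht₀.2))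
    have h1 : (∫ τ in t..t₀, ψ τ) = P t₀ - P t := by linarith
    have h2 : |h t - h t₀| = |h t₀ - h t| := abs_sub_comm _ _
    rw [h2]
    calc |h t₀ - h t| ≤ ∫ τ in t..t₀, ψ τ := hb
      _ = P t₀ - P t := h1
      _ ≤ |P t - P t₀| := by rw [abs_sub_comm]; exact le_abs_self _
  · have hb := hbd t₀ t ht₀.1 hle ht.2
    have hadd : P t₀ + ∫ τ in t₀..t, ψ τ = P t :=
      intervalIntegral.integral_add_adjacent_intervals
        (hint.mono_set (by rw [Set.uIcc_of_le hL, Set.uIcc_of_le ht₀.1]; exact Set.Icc_subset_Icc le_rfl ht₀.2))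
        (hint.mono_set (by rw [Set.uIcc_of_le hL, Set.uIcc_of_le hle]; exact Set.Icc_subset_Icc ht₀.1 ht.2))
    have h1 : (∫ τ in t₀..t, ψ τ) = P t - P t₀ := by linarith
    calc |h t - h t₀| ≤ ∫ τ in t₀..t, ψ τ := hb
      _ = P t - P t₀ := h1
      _ ≤ |P t - P t₀| := le_abs_self _

/-- the "if level < h τ" term is interval integrable when `h` is continuous on the interval. -/
lemma ifterm_intble_gt {L c : ℝ} (hL : 0 ≤ L) {h ψ : ℝ → ℝ}
    (hcont : ContinuousOn h (Set.Icc 0 L))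
    (hint : IntervalIntegrable ψ volume 0 L) :
    IntervalIntegrable (fun τ => if c < h τ then ψ τ else 0) volume 0 L := by
  obtain ⟨U, hUopen, hU⟩ := (_root_.continuousOn_iff'.mp hcont) (Set.Ioi c) isOpen_Ioi
  rw [intervalIntegrable_iff_integrableOn_Ioc_of_le hL] at hint ⊢
  have hmaj : IntegrableOn (U.indicator ψ) (Set.Ioc 0 L) volume :=
    hint.indicator hUopen.measurableSet |>.mono_set (by intro x hx; exact hx)
  refine hmaj.congr_fun ?_ measurableSet_Ioc
  intro τ hτ
  have hτIcc : τ ∈ Set.Icc 0 L := Set.Ioc_subset_Icc_self hτ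
  by_cases hcτ : c < h τ
  · have : τ ∈ U := by
      have : τ ∈ h ⁻¹' Set.Ioi c ∩ Set.Icc 0 L := ⟨hcτ, hτIcc⟩
      rw [hU] at this; exact this.1
    simp [Set.indicator_of_mem this, hcτ]
  · have : τ ∉ U := by
      intro hmem
      have : τ ∈ h ⁻¹' Set.Ioi c ∩ Set.Icc 0 L := by rw [hU]; exact ⟨hmem, hτIcc⟩
      exact hcτ this.1
    simp [Set.indicator_of_notMem this, hcτ]

lemma ifterm_intble_lt {L c : ℝ} (hL : 0 ≤ L) {h ψ : ℝ → ℝ}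
    (hcont : ContinuousOn h (Set.Icc 0 L))
    (hint : IntervalIntegrable ψ volume 0 L) :
    IntervalIntegrable (fun τ => if h τ < c then ψ τ else 0) volume 0 L := by
  have := ifterm_intble_gt (c := -c) hL (hcont.neg) hint
  have heq : (fun τ => if -c < -h τ then ψ τ else 0) = (fun τ => if h τ < c then ψ τ else 0) := by
    funext τ; simp [neg_lt_neg_iff]
  rw [← heq]
  exact this



/-- Core one-sided truncation estimate. -/
lemma core_plus {L c : ℝ} (hL : 0 ≤ L) {h ψ : ℝ → ℝ}
    (hψ0 : ∀ t, 0 ≤ ψ t)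
    (hint : IntervalIntegrable ψ volume 0 L)
    (hbd : ∀ s t, 0 ≤ s → s ≤ t → t ≤ L → |h t - h s| ≤ ∫ τ in s..t, ψ τ) :
    max (h L - c) 0 - max (h 0 - c) 0 ≤ ∫ τ in (0:ℝ)..L, (if c < h τ then ψ τ else 0) := by
  have hcont := cont_of_bd hL hint hbd
  have hIif := ifterm_intble_gt (c := c) hL hcont hint
  have hif0 : ∀ t, 0 ≤ (if c < h t then ψ t else 0) := by
    intro t; split_ifs; exacts [hψ0 t, le_rfl]
  set a := max (h 0) c with ha
  have hca : c ≤ a := le_max_right _ _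
  have h0a : h 0 ≤ a := le_max_left _ _
  have hmax0 : max (h 0 - c) 0 = a - c := by
    rw [ha, ← max_sub_sub_right (h 0) c c, sub_self]
  by_cases hcase : h L ≤ a
  · have h1 : max (h L - c) 0 ≤ max (h 0 - c) 0 := by
      rw [hmax0]
      exact max_le (by linarith) (by linarith)
    have h2 : 0 ≤ ∫ τ in (0:ℝ)..L, (if c < h τ then ψ τ else 0) :=
      intervalIntegral.integral_nonneg hL (fun u _ => hif0 u)
    linarith
  · push_neg at hcase
    set S := Set.Icc 0 L ∩ h ⁻¹' Set.Iic a with hSdef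
    have hS0 : (0:ℝ) ∈ S := ⟨⟨le_rfl, hL⟩, h0a⟩
    have hSbdd : BddAbove S := ⟨L, fun t ht => ht.1.2⟩
    have hSclosed : IsClosed S :=
      hcont.preimage_isClosed_of_isClosed isClosed_Icc isClosed_Iic
    set s' := sSup S with hs'def
    have hs'mem : s' ∈ S := hSclosed.csSup_mem ⟨0, hS0⟩ hSbdd
    have h0s' : 0 ≤ s' := hs'mem.1.1
    have hs'L : s' ≤ L := hs'mem.1.2
    have hs'le : h s' ≤ a := hs'mem.2
    have hgt : ∀ t, s' < t → t ≤ L → a < h t := by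
      intro t h1 h2
      by_contra hc
      push_neg at hc
      exact absurd (le_csSup hSbdd ⟨⟨le_trans h0s' h1.le, h2⟩, hc⟩) (not_le.mpr h1)
    have hb := hbd s' L h0s' hs'L le_rfl
    have key1 : h L - a ≤ ∫ τ in s'..L, ψ τ := by
      have : h L - a ≤ h L - h s' := by linarith
      exact le_trans this (le_trans (le_abs_self _) hb)
    have key2 : (∫ τ in s'..L, ψ τ) = ∫ τ in s'..L, (if c < h τ then ψ τ else 0) := by
      rw [intervalIntegral.integral_of_le hs'L, intervalIntegral.integral_of_le hs'L]
      apply setIntegral_congr_fun measurableSet_Ioc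
      intro t ht
      have hta : a < h t := hgt t ht.1 ht.2
      simp [lt_of_le_of_lt hca hta]
    have key3 : (∫ τ in s'..L, (if c < h τ then ψ τ else 0))
        ≤ ∫ τ in (0:ℝ)..L, (if c < h τ then ψ τ else 0) := by
      have i1 : IntervalIntegrable (fun τ => if c < h τ then ψ τ else 0) volume 0 s' :=
        hIif.mono_set (by rw [Set.uIcc_of_le hL, Set.uIcc_of_le h0s']; exact Set.Icc_subset_Icc le_rfl hs'L)
      have i2 : IntervalIntegrable (fun τ => if c < h τ then ψ τ else 0) volume s' L :=
        hIif.mono_set (by rw [Set.uIcc_of_le hL, Set.uIcc_of_le hs'L]; exact Set.Icc_subset_Icc h0s' le_rfl)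
      have hadd := intervalIntegral.integral_add_adjacent_intervals i1 i2
      have hpos : 0 ≤ ∫ τ in (0:ℝ)..s', (if c < h τ then ψ τ else 0) :=
        intervalIntegral.integral_nonneg h0s' (fun u _ => hif0 u)
      linarith
    have hLc : c < h L := lt_of_le_of_lt hca hcase
    have lhs_eq : max (h L - c) 0 - max (h 0 - c) 0 = h L - a := by
      rw [hmax0, max_eq_left (by linarith : (0:ℝ) ≤ h L - c)]
      ring
    linarith

/-- Two-sided version via time reversal. -/
lemma core_plus_abs {L c : ℝ} (hL : 0 ≤ L) {h ψ : ℝ → ℝ}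
    (hψ0 : ∀ t, 0 ≤ ψ t)
    (hint : IntervalIntegrable ψ volume 0 L)
    (hbd : ∀ s t, 0 ≤ s → s ≤ t → t ≤ L → |h t - h s| ≤ ∫ τ in s..t, ψ τ) :
    |max (h L - c) 0 - max (h 0 - c) 0| ≤ ∫ τ in (0:ℝ)..L, (if c < h τ then ψ τ else 0) := by
  have hfwd := core_plus (c := c) hL hψ0 hint hbd
  -- reversed data
  set h' := fun t => h (L - t) with hh'
  set ψ' := fun t => ψ (L - t) with hψ'
  have hint' : IntervalIntegrable ψ' volume 0 L := by
    have := (hint.comp_sub_left L).symm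
    simpa using this
  have hbd' : ∀ s t, 0 ≤ s → s ≤ t → t ≤ L → |h' t - h' s| ≤ ∫ τ in s..t, ψ' τ := by
    intro s t hs hst htL
    have h1 : |h (L - t) - h (L - s)| ≤ ∫ τ in (L-t)..(L-s), ψ τ := by
      rw [abs_sub_comm]
      exact hbd (L - t) (L - s) (by linarith) (by linarith) (by linarith)
    have h2 : (∫ τ in s..t, ψ' τ) = ∫ τ in (L-t)..(L-s), ψ τ := by
      rw [hψ']
      exact intervalIntegral.integral_comp_sub_left (a := s) (b := t) ψ L
    rw [h2]; exact h1
  have hrev := core_plus (c := c) hL (fun t => hψ0 (L - t)) hint' hbd'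
  have e1 : h' L = h 0 := by simp [hh']
  have e2 : h' 0 = h L := by simp [hh']
  rw [e1, e2] at hrev
  have e3 : (∫ τ in (0:ℝ)..L, (if c < h' τ then ψ' τ else 0))
      = ∫ τ in (0:ℝ)..L, (if c < h τ then ψ τ else 0) := by
    have := intervalIntegral.integral_comp_sub_left (a := (0:ℝ)) (b := L)
      (fun τ => if c < h τ then ψ τ else 0) L
    simpa using this
  rw [e3] at hrev
  rw [abs_sub_le_iff]
  exact ⟨hfwd, hrev⟩

/-- min-truncation version. -/
lemma core_min_abs {L c : ℝ} (hL : 0 ≤ L) {h ψ : ℝ → ℝ}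
    (hψ0 : ∀ t, 0 ≤ ψ t)
    (hint : IntervalIntegrable ψ volume 0 L)
    (hbd : ∀ s t, 0 ≤ s → s ≤ t → t ≤ L → |h t - h s| ≤ ∫ τ in s..t, ψ τ) :
    |min (h L) c - min (h 0) c| ≤ ∫ τ in (0:ℝ)..L, (if h τ < c then ψ τ else 0) := by
  have hbd' : ∀ s t, 0 ≤ s → s ≤ t → t ≤ L → |(-h) t - (-h) s| ≤ ∫ τ in s..t, ψ τ := by
    intro s t hs hst htL
    have : |-h t - -h s| = |h t - h s| := by rw [neg_sub_neg, abs_sub_comm]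
    simp only [Pi.neg_apply]
    rw [this]
    exact hbd s t hs hst htL
  have := core_plus_abs (c := -c) hL hψ0 hint hbd'
  have heq : ∀ x : ℝ, max (-x - -c) 0 = c - min x c := by
    intro x
    rcases le_total x c with hxc | hxc
    · rw [min_eq_left hxc, max_eq_left (by linarith)]; ring
    · rw [min_eq_right hxc, max_eq_right (by linarith)]; ring
  simp only [Pi.neg_apply] at this
  rw [heq, heq] at this
  have h2 : |c - min (h L) c - (c - min (h 0) c)| = |min (h L) c - min (h 0) c| := by
    rw [show c - min (h L) c - (c - min (h 0) c) = -(min (h L) c - min (h 0) c) by ring, abs_neg]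
  rw [h2] at this
  have heqif : (fun τ => if -c < -h τ then ψ τ else 0) = (fun τ => if h τ < c then ψ τ else 0) := by
    funext τ; simp [neg_lt_neg_iff]
  rwa [heqif] at this



/-- Piecewise rescaling of an upper gradient pair across the level `c`. -/
lemma gen_ug {X : Type*} [MetricSpace X] {u g : X → ℝ} (hug : IsUpperGradient u g)
    (hg0 : ∀ x, 0 ≤ g x) {α β c : ℝ} (hα : 0 ≤ α) (hβ : 0 ≤ β) :
    IsUpperGradient (fun x => α * min (u x) c + β * max (u x - c) 0)
      (fun x => if u x < c then α * g x else if c < u x then β * g x else 0) := by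
  intro L γ hL hγ
  set G := fun x => if u x < c then α * g x else if c < u x then β * g x else 0 with hGdef
  have hG0 : ∀ x, 0 ≤ G x := by
    intro x
    simp only [hGdef]
    split_ifs
    exacts [mul_nonneg hα (hg0 x), mul_nonneg hβ (hg0 x), le_rfl]
  by_cases hI : IntervalIntegrable (fun τ => g (γ τ)) volume 0 L
  · have hbd : ∀ s t, 0 ≤ s → s ≤ t → t ≤ L →
        |u (γ t) - u (γ s)| ≤ ∫ τ in s..t, g (γ τ) :=
      fun s t hs hst htL => subcurve hug hγ hs hst htL
    have hcont : ContinuousOn (fun τ => u (γ τ)) (Set.Icc 0 L) := cont_of_bd hL hI hbd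
    have hmin := core_min_abs (c := c) (h := fun τ => u (γ τ)) hL (fun t => hg0 _) hI hbd
    have hplus := core_plus_abs (c := c) (h := fun τ => u (γ τ)) hL (fun t => hg0 _) hI hbd
    have i1 := ifterm_intble_lt (c := c) (h := fun τ => u (γ τ)) hL hcont hI
    have i2 := ifterm_intble_gt (c := c) (h := fun τ => u (γ τ)) hL hcont hI
    have heqfun : (fun τ => G (γ τ)) = fun τ =>
        α * (if u (γ τ) < c then g (γ τ) else 0) + β * (if c < u (γ τ) then g (γ τ) else 0) := by
      funext τ
      rcases lt_trichotomy (u (γ τ)) c with hlt | heq | hgt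
      · simp [hGdef, hlt, not_lt.mpr hlt.le]
      · simp [hGdef, heq]
      · simp [hGdef, hgt, not_lt.mpr hgt.le]
    have hsplit : (∫ τ in (0:ℝ)..L, G (γ τ))
        = α * (∫ τ in (0:ℝ)..L, (if u (γ τ) < c then g (γ τ) else 0))
          + β * ∫ τ in (0:ℝ)..L, (if c < u (γ τ) then g (γ τ) else 0) := by
      rw [show (fun τ => G (γ τ)) = _ from heqfun]
      rw [intervalIntegral.integral_add (i1.const_mul α) (i2.const_mul β),
        intervalIntegral.integral_const_mul, intervalIntegral.integral_const_mul]
    calc |(α * min (u (γ L)) c + β * max (u (γ L) - c) 0)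
          - (α * min (u (γ 0)) c + β * max (u (γ 0) - c) 0)|
        ≤ α * |min (u (γ L)) c - min (u (γ 0)) c| + β * |max (u (γ L) - c) 0 - max (u (γ 0) - c) 0| := by
          have h1 : (α * min (u (γ L)) c + β * max (u (γ L) - c) 0)
              - (α * min (u (γ 0)) c + β * max (u (γ 0) - c) 0)
              = α * (min (u (γ L)) c - min (u (γ 0)) c)
                + β * (max (u (γ L) - c) 0 - max (u (γ 0) - c) 0) := by ring
          rw [h1]
          refine le_trans (abs_add_le _ _) ?_
          rw [abs_mul, abs_mul, abs_of_nonneg hα, abs_of_nonneg hβ]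
      _ ≤ α * (∫ τ in (0:ℝ)..L, (if u (γ τ) < c then g (γ τ) else 0))
            + β * ∫ τ in (0:ℝ)..L, (if c < u (γ τ) then g (γ τ) else 0) := by
          gcongr
      _ = ∫ τ in (0:ℝ)..L, G (γ τ) := hsplit.symm
  · have hj := hug L γ hL hγ
    rw [intervalIntegral.integral_undef hI] at hj
    have heq : u (γ L) = u (γ 0) := by
      have := abs_nonpos_iff.mp (le_antisymm hj (abs_nonneg _)).le
      linarith [sub_eq_zero.mp this]
    simp only
    rw [heq, sub_self, abs_zero]
    exact intnonneg hL (fun t => hG0 (γ t))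




/-- Concatenation of two unit-speed Lipschitz curves. -/
lemma lip_concat {X : Type*} [MetricSpace X] {L₁ L₂ : ℝ} (h1 : 0 ≤ L₁) (h2 : 0 ≤ L₂)
    {δ γ : ℝ → X} (hδ : LipschitzOnWith 1 δ (Set.Icc 0 L₁))
    (hγ : LipschitzOnWith 1 γ (Set.Icc 0 L₂)) (hm : δ L₁ = γ 0) :
    LipschitzOnWith 1 (fun t => if t ≤ L₁ then δ t else γ (t - L₁)) (Set.Icc 0 (L₁ + L₂)) := by
  rw [lipschitzOnWith_iff_dist_le_mul] at hδ hγ ⊢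
  have key : ∀ x ∈ Set.Icc 0 (L₁ + L₂), ∀ y ∈ Set.Icc 0 (L₁ + L₂), x ≤ y →
      dist ((fun t => if t ≤ L₁ then δ t else γ (t - L₁)) x)
        ((fun t => if t ≤ L₁ then δ t else γ (t - L₁)) y) ≤ dist x y := by
    intro x hx y hy hxy
    by_cases hyL : y ≤ L₁
    · have hxL : x ≤ L₁ := le_trans hxy hyL
      simp only [if_pos hxL, if_pos hyL]
      have := hδ x ⟨hx.1, hxL⟩ y ⟨hy.1, hyL⟩
      simpa using this
    · push_neg at hyL
      have hyIcc : y - L₁ ∈ Set.Icc 0 L₂ := ⟨by linarith, by linarith [hy.2]⟩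
      by_cases hxL : x ≤ L₁
      · simp only [if_pos hxL, if_neg (not_le.mpr hyL)]
        have d1 : dist (δ x) (δ L₁) ≤ dist x L₁ := by
          have := hδ x ⟨hx.1, hxL⟩ L₁ ⟨h1, le_rfl⟩
          simpa using this
        have d2 : dist (γ 0) (γ (y - L₁)) ≤ dist (0:ℝ) (y - L₁) := by
          have := hγ 0 ⟨le_rfl, h2⟩ (y - L₁) hyIcc
          simpa using this
        calc dist (δ x) (γ (y - L₁)) ≤ dist (δ x) (δ L₁) + dist (δ L₁) (γ (y - L₁)) :=
              dist_triangle _ _ _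
          _ = dist (δ x) (δ L₁) + dist (γ 0) (γ (y - L₁)) := by rw [hm]
          _ ≤ dist x L₁ + dist (0:ℝ) (y - L₁) := add_le_add d1 d2
          _ = (L₁ - x) + (y - L₁) := by
              rw [Real.dist_eq, Real.dist_eq, abs_of_nonpos (by linarith),
                abs_of_nonpos (by linarith)]
              ring
          _ = y - x := by ring
          _ = dist x y := by rw [Real.dist_eq, abs_of_nonpos (by linarith)]; ring
      · push_neg at hxL
        have hxIcc : x - L₁ ∈ Set.Icc 0 L₂ := ⟨by linarith, by linarith [hx.2]⟩
        simp only [if_neg (not_le.mpr hxL), if_neg (not_le.mpr hyL)]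
        have := hγ (x - L₁) hxIcc (y - L₁) hyIcc
        have heq : dist (x - L₁) (y - L₁) = dist x y := by
          rw [Real.dist_eq, Real.dist_eq]; congr 1; ring
        rw [heq] at this
        simpa using this
  intro x hx y hy
  rcases le_total x y with h | h
  · simpa using key x hx y hy h
  · rw [dist_comm, dist_comm x y]
    simpa using key y hy x hx h

/-- time-reversal preserves unit-speed Lipschitz. -/
lemma rev_lip {X : Type*} [MetricSpace X] {L : ℝ} {γ : ℝ → X}
    (hγ : LipschitzOnWith 1 γ (Set.Icc 0 L)) :
    LipschitzOnWith 1 (fun t => γ (L - t)) (Set.Icc 0 L) := by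
  intro a ha b hb
  have ha' : L - a ∈ Set.Icc 0 L := ⟨by linarith [ha.2], by linarith [ha.1]⟩
  have hb' : L - b ∈ Set.Icc 0 L := ⟨by linarith [hb.2], by linarith [hb.1]⟩
  have := hγ ha' hb'
  have heq : edist (L - a) (L - b) = edist a b := by
    rw [edist_dist, edist_dist, Real.dist_eq, Real.dist_eq]
    congr 1
    rw [show L - a - (L - b) = -(a - b) by ring, abs_neg]
  rwa [heq] at this

lemma rev_int {X : Type*} [MetricSpace X] (f : X → ℝ) (L : ℝ) (γ : ℝ → X) :
    (∫ t in (0:ℝ)..L, f (γ (L - t))) = ∫ t in (0:ℝ)..L, f (γ t) := by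
  have := intervalIntegral.integral_comp_sub_left (a := (0:ℝ)) (b := L)
    (fun t => f (γ t)) L
  simpa using this

/-- integral over the concatenation is at most the sum (with junk conventions). -/
lemma concat_int {X : Type*} [MetricSpace X] (f : X → ℝ) (hf0 : ∀ x, 0 ≤ f x)
    {L₁ L₂ : ℝ} (h1 : 0 ≤ L₁) (h2 : 0 ≤ L₂) (δ γ : ℝ → X) (hm : δ L₁ = γ 0) :
    (∫ t in (0:ℝ)..(L₁+L₂), f ((fun t => if t ≤ L₁ then δ t else γ (t - L₁)) t))
      ≤ (∫ t in (0:ℝ)..L₁, f (δ t)) + ∫ t in (0:ℝ)..L₂, f (γ t) := by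
  set Γ := fun t => if t ≤ L₁ then δ t else γ (t - L₁) with hΓ
  have heq1 : Set.EqOn (fun t => f (Γ t)) (fun t => f (δ t)) (Set.uIcc 0 L₁) := by
    intro t ht
    rw [Set.uIcc_of_le h1] at ht
    simp only [hΓ, if_pos ht.2]
  have heq2 : Set.EqOn (fun t => f (Γ t)) (fun t => f (γ (t - L₁)))
      (Set.uIcc L₁ (L₁ + L₂)) := by
    intro t ht
    rw [Set.uIcc_of_le (by linarith)] at ht
    by_cases hc : t ≤ L₁
    · have : t = L₁ := le_antisymm hc ht.1
      simp only [hΓ, this, if_pos le_rfl, sub_self, hm]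
    · simp only [hΓ, if_neg hc]
  by_cases Ia : IntervalIntegrable (fun t => f (δ t)) volume 0 L₁
  · by_cases Ib : IntervalIntegrable (fun t => f (γ t)) volume 0 L₂
    · -- both integrable: equality
      have i1 : IntervalIntegrable (fun t => f (Γ t)) volume 0 L₁ := by
        rw [intervalIntegrable_iff_integrableOn_Ioc_of_le h1] at Ia ⊢
        refine Ia.congr_fun (fun t ht => ?_) measurableSet_Ioc
        have htu : t ∈ Set.uIcc 0 L₁ := by
          rw [Set.uIcc_of_le h1]; exact Set.Ioc_subset_Icc_self ht
        exact (heq1 htu).symm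
      have ishift : IntervalIntegrable (fun t => f (γ (t - L₁))) volume L₁ (L₁ + L₂) := by
        have := Ib.comp_sub_right L₁
        simpa [add_comm] using this
      have i2 : IntervalIntegrable (fun t => f (Γ t)) volume L₁ (L₁ + L₂) := by
        rw [intervalIntegrable_iff_integrableOn_Ioc_of_le (by linarith)] at ishift ⊢
        refine ishift.congr_fun (fun t ht => ?_) measurableSet_Ioc
        have htu : t ∈ Set.uIcc L₁ (L₁ + L₂) := by
          rw [Set.uIcc_of_le (by linarith)]; exact Set.Ioc_subset_Icc_self ht
        exact (heq2 htu).symm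
      have hadd := intervalIntegral.integral_add_adjacent_intervals i1 i2
      have e1 : (∫ t in (0:ℝ)..L₁, f (Γ t)) = ∫ t in (0:ℝ)..L₁, f (δ t) :=
        intervalIntegral.integral_congr heq1
      have e2 : (∫ t in L₁..(L₁+L₂), f (Γ t)) = ∫ t in (0:ℝ)..L₂, f (γ t) := by
        rw [intervalIntegral.integral_congr heq2]
        have := intervalIntegral.integral_comp_sub_right (a := L₁) (b := L₁ + L₂)
          (fun t => f (γ t)) L₁
        simpa using this
      rw [← hadd, e1, e2]
  -- piece 2 not integrable
    · have hwhole : ¬ IntervalIntegrable (fun t => f (Γ t)) volume 0 (L₁ + L₂) := by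
        intro hw
        have hsub : IntervalIntegrable (fun t => f (Γ t)) volume L₁ (L₁ + L₂) :=
          hw.mono_set (by
            rw [Set.uIcc_of_le (by linarith : L₁ ≤ L₁ + L₂),
              Set.uIcc_of_le (by linarith : (0:ℝ) ≤ L₁ + L₂)]
            exact Set.Icc_subset_Icc h1 le_rfl)
        have hshift : IntervalIntegrable (fun t => f (γ (t - L₁))) volume L₁ (L₁ + L₂) := by
          rw [intervalIntegrable_iff_integrableOn_Ioc_of_le (by linarith)] at hsub ⊢
          refine hsub.congr_fun (fun t ht => ?_) measurableSet_Ioc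
          have htu : t ∈ Set.uIcc L₁ (L₁ + L₂) := by
            rw [Set.uIcc_of_le (by linarith)]; exact Set.Ioc_subset_Icc_self ht
          exact heq2 htu
        have : IntervalIntegrable (fun t => f (γ t)) volume 0 L₂ := by
          have h5 := hshift.comp_add_right L₁
          have h3 : L₁ - L₁ = (0:ℝ) := sub_self L₁
          have h4 : L₁ + L₂ - L₁ = L₂ := by ring
          rw [h3, h4] at h5
          have heqf : (fun x => f (γ (x + L₁ - L₁))) = fun x => f (γ x) := by
            funext x; rw [add_sub_cancel_right]
          rwa [heqf] at h5
        exact Ib this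
      rw [intervalIntegral.integral_undef hwhole, intervalIntegral.integral_undef Ib, add_zero]
      exact intnonneg h1 (fun t => hf0 _)
  · -- piece 1 not integrable
    have hwhole : ¬ IntervalIntegrable (fun t => f (Γ t)) volume 0 (L₁ + L₂) := by
      intro hw
      have hsub : IntervalIntegrable (fun t => f (Γ t)) volume 0 L₁ :=
        hw.mono_set (by
          rw [Set.uIcc_of_le h1, Set.uIcc_of_le (by linarith : (0:ℝ) ≤ L₁ + L₂)]
          exact Set.Icc_subset_Icc le_rfl (by linarith))
      have : IntervalIntegrable (fun t => f (δ t)) volume 0 L₁ := by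
        rw [intervalIntegrable_iff_integrableOn_Ioc_of_le h1] at hsub ⊢
        refine hsub.congr_fun (fun t ht => ?_) measurableSet_Ioc
        have htu : t ∈ Set.uIcc 0 L₁ := by
          rw [Set.uIcc_of_le h1]; exact Set.Ioc_subset_Icc_self ht
        exact heq1 htu
      exact Ia this
    rw [intervalIntegral.integral_undef hwhole, intervalIntegral.integral_undef Ia, zero_add]
    exact intnonneg h2 (fun t => hf0 _)



/-- splitting a lower integral of a sum of functions with disjoint supports,
separated by a measurable set; valid for arbitrary (non-measurable) functions. -/
lemma lintegral_split {α : Type*} [MeasurableSpace α] (ν : Measure α) {S : Set α}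
    (hS : MeasurableSet S) (f₁ f₂ : α → ℝ≥0∞)
    (h1 : ∀ x ∈ S, f₁ x = 0) (h2 : ∀ x ∉ S, f₂ x = 0) :
    ∫⁻ x, (f₁ x + f₂ x) ∂ν = (∫⁻ x, f₁ x ∂ν) + ∫⁻ x, f₂ x ∂ν := by
  have hdec : ν = ν.restrict S + ν.restrict Sᶜ :=
    (Measure.restrict_add_restrict_compl (μ := ν) hS).symm
  have hae1 : ∀ᵐ x ∂(ν.restrict S), f₁ x + f₂ x = f₂ x := by
    rw [ae_restrict_iff' hS]
    exact Filter.Eventually.of_forall (fun x hx => by rw [h1 x hx, zero_add])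
  have hae2 : ∀ᵐ x ∂(ν.restrict Sᶜ), f₁ x + f₂ x = f₁ x := by
    rw [ae_restrict_iff' hS.compl]
    exact Filter.Eventually.of_forall (fun x hx => by rw [h2 x hx, add_zero])
  have hae3 : ∀ᵐ x ∂(ν.restrict S), f₁ x = 0 := by
    rw [ae_restrict_iff' hS]
    exact Filter.Eventually.of_forall h1
  have hae4 : ∀ᵐ x ∂(ν.restrict Sᶜ), f₂ x = 0 := by
    rw [ae_restrict_iff' hS.compl]
    exact Filter.Eventually.of_forall h2
  calc ∫⁻ x, (f₁ x + f₂ x) ∂ν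
      = (∫⁻ x, (f₁ x + f₂ x) ∂(ν.restrict S)) + ∫⁻ x, (f₁ x + f₂ x) ∂(ν.restrict Sᶜ) := by
        conv_lhs => rw [hdec]
        exact lintegral_add_measure _ _ _
    _ = (∫⁻ x, f₂ x ∂(ν.restrict S)) + ∫⁻ x, f₁ x ∂(ν.restrict Sᶜ) := by
        rw [lintegral_congr_ae hae1, lintegral_congr_ae hae2]
    _ = ((∫⁻ x, f₁ x ∂(ν.restrict S)) + ∫⁻ x, f₁ x ∂(ν.restrict Sᶜ))
        + ((∫⁻ x, f₂ x ∂(ν.restrict S)) + ∫⁻ x, f₂ x ∂(ν.restrict Sᶜ)) := by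
        rw [lintegral_congr_ae hae3, lintegral_congr_ae hae4]
        simp only [lintegral_zero, zero_add, add_zero]
        ring
    _ = (∫⁻ x, f₁ x ∂ν) + ∫⁻ x, f₂ x ∂ν := by
        conv_rhs => rw [hdec]
        rw [lintegral_add_measure, lintegral_add_measure]




/-- endpoints agree on curves where the upper gradient is not integrable. -/
lemma endpoints_eq_of_junk {X : Type*} [MetricSpace X] {u g : X → ℝ}
    (hug : IsUpperGradient u g) {L : ℝ} {γ : ℝ → X} (hL : 0 ≤ L)
    (hγ : LipschitzOnWith 1 γ (Set.Icc 0 L))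
    (hI : ¬ IntervalIntegrable (fun τ => g (γ τ)) volume 0 L) : u (γ L) = u (γ 0) := by
  have hj := hug L γ hL hγ
  rw [intervalIntegral.integral_undef hI] at hj
  have := le_antisymm hj (abs_nonneg _)
  exact sub_eq_zero.mp (abs_eq_zero.mp this)

/-- indicator (by an open set, composed with a continuous-on-interval curve) terms
are interval integrable. -/
lemma comp_if_open_intble {X : Type*} [MetricSpace X] {P : X → Prop} [DecidablePred P]
    (hV : IsOpen {x | P x})
    {L : ℝ} (hL : 0 ≤ L) {γ : ℝ → X} (hγc : ContinuousOn γ (Set.Icc 0 L)) {w : ℝ → ℝ}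
    (hw : IntervalIntegrable w volume 0 L) :
    IntervalIntegrable (fun τ => if P (γ τ) then w τ else 0) volume 0 L ∧
    IntervalIntegrable (fun τ => if P (γ τ) then 0 else w τ) volume 0 L := by
  obtain ⟨U, hUopen, hU⟩ := (_root_.continuousOn_iff'.mp hγc) {x | P x} hV
  rw [intervalIntegrable_iff_integrableOn_Ioc_of_le hL] at hw
  have hmem : ∀ τ ∈ Set.Ioc (0:ℝ) L, (P (γ τ) ↔ τ ∈ U) := by
    intro τ hτ
    have hτIcc : τ ∈ Set.Icc 0 L := Set.Ioc_subset_Icc_self hτ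
    constructor
    · intro hmem
      have : τ ∈ γ ⁻¹' {x | P x} ∩ Set.Icc 0 L := ⟨hmem, hτIcc⟩
      rw [hU] at this; exact this.1
    · intro hmem
      have : τ ∈ U ∩ Set.Icc 0 L := ⟨hmem, hτIcc⟩
      rw [← hU] at this; exact this.1
  constructor
  · rw [intervalIntegrable_iff_integrableOn_Ioc_of_le hL]
    refine (hw.indicator hUopen.measurableSet).congr_fun (fun τ hτ => ?_) measurableSet_Ioc
    by_cases hc : P (γ τ)
    · simp [Set.indicator_of_mem ((hmem τ hτ).mp hc), hc]
    · simp [Set.indicator_of_notMem (fun h => hc ((hmem τ hτ).mpr h)), hc]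
  · rw [intervalIntegrable_iff_integrableOn_Ioc_of_le hL]
    refine (hw.indicator hUopen.measurableSet.compl).congr_fun (fun τ hτ => ?_) measurableSet_Ioc
    by_cases hc : P (γ τ)
    · simp [Set.indicator_of_notMem (show τ ∉ Uᶜ from fun h => h ((hmem τ hτ).mp hc)), hc]
    · simp [Set.indicator_of_mem (show τ ∈ Uᶜ from fun h => hc ((hmem τ hτ).mpr h)), hc]

/-- THE lower-bound gluing: any admissible pair for the superlevel set yields an
admissible pair for `(E, Ω)` with controlled energy. -/
lemma key_lower {X : Type*} [MetricSpace X] [MeasurableSpace X]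
    (μ : Measure X) (p : ℝ)
    (Ω : Set X) (E : Set X) (hE : E ⊆ Ω)
    (uE gE : X → ℝ) (hu1 : ∀ x ∈ E, uE x = 1) (hu0 : ∀ x ∉ Ω, uE x = 0)
    (hug : IsUpperGradient uE gE) (hg0 : ∀ x, 0 ≤ gE x)
    (M : ℝ) (hM0 : 0 < M) (hM1 : M < 1)
    (hEMopen : IsOpen {x | M < uE x})
    (v g : X → ℝ) (hv1 : ∀ x, M < uE x → v x = 1) (hv0 : ∀ x ∉ Ω, v x = 0)
    (hvg : IsUpperGradient v g) (hvg0 : ∀ x, 0 ≤ g x) :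
    varCap p μ E Ω ≤ ∫⁻ x in Ω, ENNReal.ofReal ((M * (if M < uE x then 0 else g x)
        + (if M < uE x then gE x else 0)) ^ p) ∂μ := by
  classical
  set G : X → ℝ := fun x => M * (if M < uE x then 0 else g x)
      + (if M < uE x then gE x else 0) with hGdef
  have hG0 : ∀ x, 0 ≤ G x := by
    intro x
    apply add_nonneg
    · apply mul_nonneg hM0.le; split_ifs; exacts [le_rfl, hvg0 x]
    · split_ifs; exacts [hg0 x, le_rfl]
  set R : X → Set ℝ := fun x => {r | ∃ L γ, 0 ≤ L ∧ LipschitzOnWith 1 γ (Set.Icc 0 L) ∧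
      γ 0 ∉ Ω ∧ γ L = x ∧ r = ∫ τ in (0:ℝ)..L, G (γ τ)} with hRdef
  set w : X → ℝ := fun x => sInf (insert 1 (R x)) with hwdef
  have hRnn : ∀ x, ∀ r ∈ R x, 0 ≤ r := by
    rintro x r ⟨L, γ, hL, hγ, h0, hLx, rfl⟩
    exact intnonneg hL (fun t => hG0 (γ t))
  have hbdd : ∀ x, BddBelow (insert 1 (R x)) := by
    intro x
    refine ⟨0, ?_⟩
    rintro r (rfl | hr)
    · exact zero_le_one
    · exact hRnn x r hr
  have hwle1 : ∀ x, w x ≤ 1 := fun x => csInf_le (hbdd x) (Set.mem_insert _ _)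
  have hwnn : ∀ x, 0 ≤ w x := by
    intro x
    apply le_csInf (Set.insert_nonempty _ _)
    rintro r (rfl | hr)
    · exact zero_le_one
    · exact hRnn x r hr
  -- transfer along curves
  have htrans : ∀ (L : ℝ) (γ : ℝ → X), 0 ≤ L → LipschitzOnWith 1 γ (Set.Icc 0 L) →
      ∀ r ∈ R (γ 0), ∃ r' ∈ R (γ L), r' ≤ r + ∫ τ in (0:ℝ)..L, G (γ τ) := by
    rintro L γ hL hγ r ⟨L₁, δ, hL₁, hδ, hδ0, hδend, rfl⟩
    set Γ := fun t => if t ≤ L₁ then δ t else γ (t - L₁) with hΓdef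
    have hmatch : δ L₁ = γ 0 := hδend
    have hΓlip : LipschitzOnWith 1 Γ (Set.Icc 0 (L₁ + L)) :=
      lip_concat hL₁ hL hδ hγ hmatch
    have hΓ0 : Γ 0 ∉ Ω := by
      simp only [hΓdef, if_pos hL₁]
      exact hδ0
    have hΓend : Γ (L₁ + L) = γ L := by
      by_cases hc : L₁ + L ≤ L₁
      · have hLeq : L = 0 := le_antisymm (by linarith) hL
        simp only [hΓdef, hLeq, add_zero, if_pos le_rfl, hmatch]
      · simp only [hΓdef, if_neg hc, add_sub_cancel_left]
    refine ⟨∫ τ in (0:ℝ)..(L₁+L), G (Γ τ), ⟨L₁ + L, Γ, by linarith, hΓlip, hΓ0, hΓend, rfl⟩, ?_⟩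
    exact concat_int G hG0 hL₁ hL δ γ hmatch
  -- nonemptiness transfer
  have hne : ∀ (L : ℝ) (γ : ℝ → X), 0 ≤ L → LipschitzOnWith 1 γ (Set.Icc 0 L) →
      (R (γ 0)).Nonempty → (R (γ L)).Nonempty := by
    intro L γ hL hγ ⟨r, hr⟩
    obtain ⟨r', hr', _⟩ := htrans L γ hL hγ r hr
    exact ⟨r', hr'⟩
  -- the one-sided Harnack-type inequality
  have hH3 : ∀ (L : ℝ) (γ : ℝ → X), 0 ≤ L → LipschitzOnWith 1 γ (Set.Icc 0 L) →
      w (γ L) ≤ w (γ 0) + ∫ τ in (0:ℝ)..L, G (γ τ) := by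
    intro L γ hL hγ
    have hInn : 0 ≤ ∫ τ in (0:ℝ)..L, G (γ τ) := intnonneg hL (fun t => hG0 (γ t))
    by_cases hRy : (R (γ 0)).Nonempty
    · have hlb : ∀ b ∈ insert 1 (R (γ 0)), w (γ L) - (∫ τ in (0:ℝ)..L, G (γ τ)) ≤ b := by
        rintro b (rfl | hb)
        · linarith [hwle1 (γ L)]
        · obtain ⟨r', hr', hle⟩ := htrans L γ hL hγ b hb
          have : w (γ L) ≤ r' := csInf_le (hbdd _) (Set.mem_insert_of_mem _ hr')
          linarith
      have := le_csInf (Set.insert_nonempty _ _) hlb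
      have hwy : w (γ 0) = sInf (insert 1 (R (γ 0))) := rfl
      linarith [this]
    · have hempty : R (γ 0) = ∅ := Set.not_nonempty_iff_eq_empty.mp hRy
      have hw0 : w (γ 0) = 1 := by
        show sInf (insert 1 (R (γ 0))) = 1
        rw [hempty]
        simp
      rw [hw0]
      linarith [hwle1 (γ L)]
  have hwug : IsUpperGradient w G := by
    intro L γ hL hγ
    have h1 := hH3 L γ hL hγ
    have h2 : w (γ 0) ≤ w (γ L) + ∫ τ in (0:ℝ)..L, G (γ τ) := by
      have h3 := hH3 L (fun t => γ (L - t)) hL (rev_lip hγ)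
      simp only [sub_self, sub_zero] at h3
      rw [rev_int (fun x => G x) L γ] at h3
      exact h3
    rw [abs_sub_le_iff]
    constructor <;> linarith
  -- admissibility: value 1 on E
  have hwE : ∀ x ∈ E, w x = 1 := by
    intro x hx
    refine le_antisymm (hwle1 x) (le_csInf (Set.insert_nonempty _ _) ?_)
    rintro b (rfl | ⟨L, γ, hL, hγ, hγ0, hγL, rfl⟩)
    · exact le_rfl
    · -- forced integrability of both gradients along γ
      have hgint : IntervalIntegrable (fun τ => g (γ τ)) volume 0 L := by
        by_contra hc
        have heq := endpoints_eq_of_junk hvg hL hγ hc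
        rw [hγL] at heq
        have hvx : v x = 1 := hv1 x (by rw [hu1 x hx]; exact hM1)
        rw [hvx, hv0 _ hγ0] at heq
        norm_num at heq
      have hgEint : IntervalIntegrable (fun τ => gE (γ τ)) volume 0 L := by
        by_contra hc
        have heq := endpoints_eq_of_junk hug hL hγ hc
        rw [hγL, hu1 x hx, hu0 _ hγ0] at heq
        norm_num at heq
      have hbdv : ∀ s t, 0 ≤ s → s ≤ t → t ≤ L →
          |v (γ t) - v (γ s)| ≤ ∫ τ in s..t, g (γ τ) :=
        fun s t hs hst htL => subcurve hvg hγ hs hst htL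
      have hcontv := cont_of_bd hL hgint hbdv
      have hbdu : ∀ s t, 0 ≤ s → s ≤ t → t ≤ L →
          |uE (γ t) - uE (γ s)| ≤ ∫ τ in s..t, gE (γ τ) :=
        fun s t hs hst htL => subcurve hug hγ hs hst htL
      have hγcont : ContinuousOn γ (Set.Icc 0 L) := hγ.continuousOn
      -- part 1: the modified-g part contributes at least M
      have hmin := core_min_abs (c := 1) (h := fun τ => v (γ τ)) hL
        (fun t => hvg0 _) hgint hbdv
      have hval1 : |min (v (γ L)) 1 - min (v (γ 0)) 1| = 1 := by
        have hvx : v x = 1 := hv1 x (by rw [hu1 x hx]; exact hM1)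
        rw [hγL, hvx, hv0 _ hγ0]
        norm_num
      rw [hval1] at hmin
      have hint1 : IntervalIntegrable (fun τ => if v (γ τ) < 1 then g (γ τ) else 0)
          volume 0 L := ifterm_intble_lt hL hcontv hgint
      have hpair := comp_if_open_intble (P := fun x => M < uE x) hEMopen hL hγcont hgint
      have hint2 : IntervalIntegrable (fun τ => if M < uE (γ τ) then 0 else g (γ τ))
          volume 0 L := hpair.2
      have hcmp : ∀ τ ∈ Set.Icc 0 L, (if v (γ τ) < 1 then g (γ τ) else 0)
          ≤ (if M < uE (γ τ) then 0 else g (γ τ)) := by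
        intro τ _
        by_cases hM' : M < uE (γ τ)
        · rw [if_pos hM', hv1 _ hM']
          simp
        · rw [if_neg hM']
          split_ifs
          exacts [le_rfl, hvg0 _]
      have hpart1 : 1 ≤ ∫ τ in (0:ℝ)..L, (if M < uE (γ τ) then 0 else g (γ τ)) :=
        le_trans hmin (intervalIntegral.integral_mono_on hL hint1 hint2 hcmp)
      -- part 2: the gE part contributes at least 1 - M
      have hplus := core_plus_abs (c := M) (h := fun τ => uE (γ τ)) hL
        (fun t => hg0 _) hgEint hbdu
      have hval2 : |max (uE (γ L) - M) 0 - max (uE (γ 0) - M) 0| = 1 - M := by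
        rw [hγL, hu1 x hx, hu0 _ hγ0]
        rw [max_eq_left (by linarith), max_eq_right (by linarith)]
        rw [sub_zero, abs_of_nonneg (by linarith)]
      rw [hval2] at hplus
      have hint3 : IntervalIntegrable (fun τ => if M < uE (γ τ) then gE (γ τ) else 0)
          volume 0 L := by
        have := (comp_if_open_intble (P := fun x => M < uE x) hEMopen hL hγcont hgEint).1
        exact this
      have hpart2 : 1 - M ≤ ∫ τ in (0:ℝ)..L, (if M < uE (γ τ) then gE (γ τ) else 0) := by
        refine le_trans hplus ?_
        apply le_of_eq
        rfl
      -- combine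
      have hsplitG : (∫ τ in (0:ℝ)..L, G (γ τ))
          = M * (∫ τ in (0:ℝ)..L, (if M < uE (γ τ) then 0 else g (γ τ)))
            + ∫ τ in (0:ℝ)..L, (if M < uE (γ τ) then gE (γ τ) else 0) := by
        have heqfun : (fun τ => G (γ τ)) = fun τ =>
            M * (if M < uE (γ τ) then 0 else g (γ τ))
              + (if M < uE (γ τ) then gE (γ τ) else 0) := rfl
        rw [heqfun, intervalIntegral.integral_add (hint2.const_mul M) hint3,
          intervalIntegral.integral_const_mul]
      calc (1:ℝ) = M * 1 + (1 - M) := by ring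
        _ ≤ M * (∫ τ in (0:ℝ)..L, (if M < uE (γ τ) then 0 else g (γ τ)))
            + ∫ τ in (0:ℝ)..L, (if M < uE (γ τ) then gE (γ τ) else 0) :=
          add_le_add (mul_le_mul_of_nonneg_left hpart1 hM0.le) hpart2
        _ = ∫ τ in (0:ℝ)..L, G (γ τ) := hsplitG.symm
  -- admissibility: value 0 off Ω
  have hwO : ∀ x ∉ Ω, w x = 0 := by
    intro x hx
    refine le_antisymm ?_ (hwnn x)
    have h0mem : (0:ℝ) ∈ R x := by
      refine ⟨0, fun _ => x, le_rfl, ((LipschitzWith.const x).weaken ?_).lipschitzOnWith,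
        hx, rfl, ?_⟩
      · exact zero_le_one
      · rw [intervalIntegral.integral_same]
    exact csInf_le (hbdd x) (Set.mem_insert_of_mem _ h0mem)
  -- conclude
  rw [varCap]
  exact iInf_le_of_le w (iInf_le_of_le ⟨hwE, hwO⟩ (iInf_le_of_le G
    (iInf_le_of_le ⟨hwug, hG0⟩ le_rfl)))


end SuperlevelAux


open SuperlevelAux in
/-- Proposition 4.1. If `u_E` is the (lsc-regularized) capacitary
potential of `E` in the bounded open set `Ω`, with minimal upper gradient `g_E`
realizing the capacity, and `0 < M < 1`, then
`cap_p({u_E > M}, Ω) = M^{1-p} · cap_p(E, Ω)`. -/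
theorem superlevel_capacity
    {X : Type*} [MetricSpace X] [MeasurableSpace X] [BorelSpace X] [CompleteSpace X]
    (μ : Measure X) (p : ℝ) (hp : 1 < p)
    (hunb : ¬ Bornology.IsBounded (Set.univ : Set X))
    (hdoub : IsDoubling μ) (hPI : SupportsPoincare p μ)
    (Ω : Set X) (hΩo : IsOpen Ω) (hΩb : Bornology.IsBounded Ω) (hΩne : Ω.Nonempty)
    (E : Set X) (hE : E ⊆ Ω)
    (uE gE : X → ℝ)
    (hadm : (∀ x ∈ E, uE x = 1) ∧ ∀ x ∉ Ω, uE x = 0)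
    (hug : IsUpperGradient uE gE) (hg0 : ∀ x, 0 ≤ gE x)
    (hlsc : LowerSemicontinuousOn uE Ω)
    (hmin : ∫⁻ x in Ω, ENNReal.ofReal (gE x ^ p) ∂μ = varCap p μ E Ω)
    (hfin : varCap p μ E Ω < ⊤)
    (M : ℝ) (hM0 : 0 < M) (hM1 : M < 1) :
    varCap p μ {x ∈ Ω | M < uE x} Ω = ENNReal.ofReal (M ^ (1 - p)) * varCap p μ E Ω := by
  classical
  have hp0 : p ≠ 0 := by positivity
  have hppos : (0:ℝ) < p := by linarith
  -- basic structure of the superlevel set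
  have hsub : ∀ x, M < uE x → x ∈ Ω := by
    intro x hx
    by_contra hc
    rw [hadm.2 x hc] at hx
    linarith
  have hEMeq : {x ∈ Ω | M < uE x} = {x | M < uE x} := by
    ext x
    exact ⟨fun hx => hx.2, fun hx => ⟨hsub x hx, hx⟩⟩
  have hEMopen : IsOpen {x | M < uE x} := by
    rw [isOpen_iff_mem_nhds]
    intro x hx
    have hxΩ : x ∈ Ω := hsub x hx
    have h1 := hlsc x hxΩ M hx
    rwa [nhdsWithin_eq_nhds.mpr (hΩo.mem_nhds hxΩ)] at h1
  have hSmeas : MeasurableSet {x | M < uE x} := hEMopen.measurableSet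
  set K := varCap p μ E Ω with hK
  have hKfin : K ≠ ⊤ := hfin.ne
  -- split energies
  set A' := ∫⁻ x in Ω, ENNReal.ofReal ((if uE x < M then gE x else 0) ^ p) ∂μ with hA'
  set B' := ∫⁻ x in Ω, ENNReal.ofReal ((if M < uE x then gE x else 0) ^ p) ∂μ with hB'
  -- energy of the rescaled candidates
  have hener : ∀ α β : ℝ, 0 ≤ α → 0 ≤ β →
      (∫⁻ x in Ω, ENNReal.ofReal ((if uE x < M then α * gE x
          else if M < uE x then β * gE x else 0) ^ p) ∂μ)
        = ENNReal.ofReal (α ^ p) * A' + ENNReal.ofReal (β ^ p) * B' := by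
    intro α β hα hβ
    have hpt : ∀ x, ENNReal.ofReal ((if uE x < M then α * gE x
          else if M < uE x then β * gE x else 0) ^ p)
        = ENNReal.ofReal (α ^ p) * ENNReal.ofReal ((if uE x < M then gE x else 0) ^ p)
          + ENNReal.ofReal (β ^ p) * ENNReal.ofReal ((if M < uE x then gE x else 0) ^ p) := by
      intro x
      rcases lt_trichotomy (uE x) M with hlt | heq | hgt
      · rw [if_pos hlt, if_pos hlt, if_neg (by linarith), Real.mul_rpow hα (hg0 x),
          ENNReal.ofReal_mul (Real.rpow_nonneg hα p), Real.zero_rpow hp0]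
        simp
      · rw [if_neg (by linarith), if_neg (by linarith), if_neg (by linarith),
          if_neg (by linarith), Real.zero_rpow hp0]
        simp [Real.zero_rpow hp0]
      · rw [if_neg (by linarith), if_pos hgt, if_neg (by linarith), if_pos hgt,
          Real.mul_rpow hβ (hg0 x), ENNReal.ofReal_mul (Real.rpow_nonneg hβ p),
          Real.zero_rpow hp0]
        simp
    calc (∫⁻ x in Ω, ENNReal.ofReal ((if uE x < M then α * gE x
          else if M < uE x then β * gE x else 0) ^ p) ∂μ)
        = ∫⁻ x in Ω, (ENNReal.ofReal (α ^ p)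
              * ENNReal.ofReal ((if uE x < M then gE x else 0) ^ p)
            + ENNReal.ofReal (β ^ p)
              * ENNReal.ofReal ((if M < uE x then gE x else 0) ^ p)) ∂μ := by
          exact lintegral_congr hpt
      _ = (∫⁻ x in Ω, ENNReal.ofReal (α ^ p)
              * ENNReal.ofReal ((if uE x < M then gE x else 0) ^ p) ∂μ)
          + ∫⁻ x in Ω, ENNReal.ofReal (β ^ p)
              * ENNReal.ofReal ((if M < uE x then gE x else 0) ^ p) ∂μ := by
          refine lintegral_split (μ.restrict Ω) hSmeas _ _ ?_ ?_
          · intro x hx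
            have hx' : M < uE x := hx
            rw [if_neg (not_lt.mpr (le_of_lt hx')), Real.zero_rpow hp0]
            simp
          · intro x hx
            have hx' : ¬ (M < uE x) := hx
            rw [if_neg hx', Real.zero_rpow hp0]
            simp
      _ = ENNReal.ofReal (α ^ p) * A' + ENNReal.ofReal (β ^ p) * B' := by
          rw [lintegral_const_mul' _ _ ENNReal.ofReal_ne_top,
            lintegral_const_mul' _ _ ENNReal.ofReal_ne_top]
  -- the family of admissible rescalings and minimality
  have hfam : ∀ α β : ℝ, 0 ≤ α → 0 ≤ β → α * M + β * (1 - M) = 1 →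
      K ≤ ENNReal.ofReal (α ^ p) * A' + ENNReal.ofReal (β ^ p) * B' := by
    intro α β hα hβ hcon
    have hugc := gen_ug hug hg0 (c := M) hα hβ
    have hGnn : ∀ x, 0 ≤ (if uE x < M then α * gE x else if M < uE x then β * gE x else 0) := by
      intro x
      split_ifs
      exacts [mul_nonneg hα (hg0 x), mul_nonneg hβ (hg0 x), le_rfl]
    have hadm1 : ∀ x ∈ E, α * min (uE x) M + β * max (uE x - M) 0 = 1 := by
      intro x hx
      rw [hadm.1 x hx, min_eq_right hM1.le, max_eq_left (by linarith)]
      linarith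
    have hadm0 : ∀ x ∉ Ω, α * min (uE x) M + β * max (uE x - M) 0 = 0 := by
      intro x hx
      rw [hadm.2 x hx, min_eq_left hM0.le, max_eq_right (by linarith)]
      ring
    have step1 : K ≤ ∫⁻ x in Ω, ENNReal.ofReal ((if uE x < M then α * gE x
        else if M < uE x then β * gE x else 0) ^ p) ∂μ := by
      rw [hK, varCap]
      exact iInf_le_of_le _ (iInf_le_of_le ⟨hadm1, hadm0⟩ (iInf_le_of_le _
        (iInf_le_of_le ⟨hugc, hGnn⟩ le_rfl)))
    rwa [hener α β hα hβ] at step1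
  -- A' + B' = K
  have hABle : A' + B' ≤ K := by
    have h := hener 1 1 zero_le_one zero_le_one
    simp only [Real.one_rpow, ENNReal.ofReal_one, one_mul, one_mul] at h
    rw [← h, ← hmin]
    apply lintegral_mono
    intro x
    apply ENNReal.ofReal_le_ofReal
    rcases lt_trichotomy (uE x) M with hlt | heq | hgt
    · rw [if_pos hlt]
    · rw [if_neg (by linarith), if_neg (by linarith), Real.zero_rpow hp0]
      exact Real.rpow_nonneg (hg0 x) p
    · rw [if_neg (by linarith), if_pos hgt]
  have hKle : K ≤ A' + B' := by
    have h := hfam 1 1 zero_le_one zero_le_one (by ring)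
    simpa [Real.one_rpow, ENNReal.ofReal_one, one_mul] using h
  have hAB : A' + B' = K := le_antisymm hABle hKle
  have hA'ne : A' ≠ ⊤ := by
    intro hc
    rw [hc] at hAB
    simp at hAB
    exact hKfin hAB.symm
  have hB'ne : B' ≠ ⊤ := by
    intro hc
    rw [hc] at hAB
    simp at hAB
    exact hKfin hAB.symm
  -- real-valued quantities
  set Ar := A'.toReal with hArdef
  set Br := B'.toReal with hBrdef
  set Kr := K.toReal with hKrdef
  have hABr : Ar + Br = Kr := by
    rw [hArdef, hBrdef, hKrdef, ← ENNReal.toReal_add hA'ne hB'ne, hAB]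
  have hArnn : 0 ≤ Ar := ENNReal.toReal_nonneg
  have hBrnn : 0 ≤ Br := ENNReal.toReal_nonneg
  -- the perturbation function
  set F : ℝ → ℝ := fun ε => Ar * (1 + (1-M)*ε) ^ p + Br * (1 - M*ε) ^ p with hFdef
  have hF0 : F 0 = Kr := by
    simp only [hFdef, mul_zero, add_zero, sub_zero, Real.one_rpow]
    linarith
  have hFge : ∀ ε : ℝ, |ε| < 1 → Kr ≤ F ε := by
    intro ε hε
    obtain ⟨hε1, hε2⟩ := abs_lt.mp hε
    have hα : (0:ℝ) ≤ 1 + (1-M)*ε := by nlinarith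
    have hβ : (0:ℝ) ≤ 1 - M*ε := by nlinarith
    have hcon : (1 + (1-M)*ε) * M + (1 - M*ε) * (1 - M) = 1 := by ring
    have h := hfam _ _ hα hβ hcon
    have hRHSne : ENNReal.ofReal ((1 + (1-M)*ε) ^ p) * A'
        + ENNReal.ofReal ((1 - M*ε) ^ p) * B' ≠ ⊤ :=
      ENNReal.add_ne_top.mpr ⟨ENNReal.mul_ne_top ENNReal.ofReal_ne_top hA'ne,
        ENNReal.mul_ne_top ENNReal.ofReal_ne_top hB'ne⟩
    have h2 := ENNReal.toReal_mono hRHSne h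
    rw [ENNReal.toReal_add (ENNReal.mul_ne_top ENNReal.ofReal_ne_top hA'ne)
      (ENNReal.mul_ne_top ENNReal.ofReal_ne_top hB'ne), ENNReal.toReal_mul,
      ENNReal.toReal_mul, ENNReal.toReal_ofReal (Real.rpow_nonneg hα p),
      ENNReal.toReal_ofReal (Real.rpow_nonneg hβ p)] at h2
    rw [hFdef]
    simp only
    rw [hKrdef]
    calc K.toReal ≤ (1 + (1-M)*ε) ^ p * A'.toReal + (1 - M*ε) ^ p * B'.toReal := h2
      _ = Ar * (1 + (1-M)*ε) ^ p + Br * (1 - M*ε) ^ p := by rw [hArdef, hBrdef]; ring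
  have hlocmin : IsLocalMin F 0 := by
    rw [IsLocalMin, IsMinFilter]
    rw [Metric.eventually_nhds_iff]
    refine ⟨1, one_pos, fun ε hd => ?_⟩
    rw [Real.dist_eq, sub_zero] at hd
    rw [hF0]
    exact hFge ε hd
  -- derivative at 0
  have hd1 : HasDerivAt (fun ε : ℝ => 1 + (1-M)*ε) (1-M) 0 := by
    simpa using ((hasDerivAt_id (0:ℝ)).const_mul (1-M)).const_add 1
  have hd1' : HasDerivAt (fun ε : ℝ => (1 + (1-M)*ε) ^ p) ((1-M) * p) 0 := by
    have := hd1.rpow_const (p := p) (Or.inr hp.le)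
    simpa using this
  have hd2 : HasDerivAt (fun ε : ℝ => 1 - M*ε) (-M) 0 := by
    simpa using ((hasDerivAt_id (0:ℝ)).const_mul M).const_sub 1
  have hd2' : HasDerivAt (fun ε : ℝ => (1 - M*ε) ^ p) (-(M * p)) 0 := by
    have := hd2.rpow_const (p := p) (Or.inr hp.le)
    simpa using this
  have hdF : HasDerivAt F (Ar * ((1-M) * p) + Br * (-(M * p))) 0 :=
    (hd1'.const_mul Ar).add (hd2'.const_mul Br)
  have hder0 : Ar * ((1-M) * p) + Br * (-(M * p)) = 0 := by
    rw [← hdF.deriv]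
    exact hlocmin.deriv_eq_zero
  have hfact : p * ((1-M) * Ar - M * Br) = 0 := by linear_combination hder0
  have hbal : (1-M) * Ar = M * Br := by
    rcases mul_eq_zero.mp hfact with h | h
    · exact absurd h hp0
    · linarith
  have hArval : Ar = M * Kr := by
    have hMK : M * Kr = M * Ar + M * Br := by rw [← hABr]; ring
    linarith
  have hBrval : Br = (1-M) * Kr := by
    have hMK : (1-M) * Kr = (1-M) * Ar + (1-M) * Br := by rw [← hABr]; ring
    linarith
  -- back to ENNReal identities
  have hA'val : A' = ENNReal.ofReal M * K := by
    rw [← ENNReal.ofReal_toReal hA'ne, ← hArdef, hArval,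
      ENNReal.ofReal_mul hM0.le, hKrdef, ENNReal.ofReal_toReal hKfin]
  have hB'val : B' = ENNReal.ofReal (1-M) * K := by
    rw [← ENNReal.ofReal_toReal hB'ne, ← hBrdef, hBrval,
      ENNReal.ofReal_mul (by linarith : (0:ℝ) ≤ 1-M), hKrdef,
      ENNReal.ofReal_toReal hKfin]
  -- UPPER BOUND
  have hupper : varCap p μ {x ∈ Ω | M < uE x} Ω ≤ ENNReal.ofReal (M ^ (1-p)) * K := by
    have hα : (0:ℝ) ≤ 1/M := by positivity
    have hugc := gen_ug hug hg0 (c := M) hα (le_refl (0:ℝ))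
    have hadm1 : ∀ x ∈ {x ∈ Ω | M < uE x},
        (1/M) * min (uE x) M + 0 * max (uE x - M) 0 = 1 := by
      intro x hx
      rw [min_eq_right (le_of_lt hx.2), zero_mul, add_zero]
      field_simp
    have hadm0 : ∀ x ∉ Ω, (1/M) * min (uE x) M + 0 * max (uE x - M) 0 = 0 := by
      intro x hx
      rw [hadm.2 x hx, min_eq_left hM0.le, mul_zero, zero_mul, add_zero]
    have hGnn : ∀ x, 0 ≤ (if uE x < M then (1/M) * gE x
        else if M < uE x then 0 * gE x else 0) := by
      intro x
      split_ifs
      exacts [mul_nonneg hα (hg0 x), mul_nonneg (le_refl 0) (hg0 x), le_rfl]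
    have step1 : varCap p μ {x ∈ Ω | M < uE x} Ω
        ≤ ∫⁻ x in Ω, ENNReal.ofReal ((if uE x < M then (1/M) * gE x
            else if M < uE x then 0 * gE x else 0) ^ p) ∂μ := by
      rw [varCap]
      exact iInf_le_of_le _ (iInf_le_of_le ⟨hadm1, hadm0⟩ (iInf_le_of_le _
        (iInf_le_of_le ⟨hugc, hGnn⟩ le_rfl)))
    rw [hener (1/M) 0 hα (le_refl 0), Real.zero_rpow hp0, ENNReal.ofReal_zero,
      zero_mul, add_zero, hA'val] at step1
    refine le_trans step1 (le_of_eq ?_)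
    rw [← mul_assoc, ← ENNReal.ofReal_mul (Real.rpow_nonneg hα p)]
    congr 2
    rw [one_div, Real.inv_rpow hM0.le, ← Real.rpow_neg hM0.le,
      show (1:ℝ)-p = -p + 1 by ring, Real.rpow_add hM0, Real.rpow_one]
  -- LOWER BOUND
  have hlower : ENNReal.ofReal (M ^ (1-p)) * K ≤ varCap p μ {x ∈ Ω | M < uE x} Ω := by
    rw [varCap]
    refine le_iInf fun v => le_iInf fun hv => le_iInf fun g => le_iInf fun hg => ?_
    have hv1 : ∀ x, M < uE x → v x = 1 := fun x hx => hv.1 x ⟨hsub x hx, hx⟩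
    have hkey := key_lower μ p Ω E hE uE gE hadm.1 hadm.2 hug hg0 M hM0 hM1 hEMopen
      v g hv1 hv.2 hg.1 hg.2
    set Q := ∫⁻ x in Ω, ENNReal.ofReal ((if M < uE x then 0 else g x) ^ p) ∂μ with hQdef
    have hpt : ∀ x, ENNReal.ofReal ((M * (if M < uE x then 0 else g x)
          + (if M < uE x then gE x else 0)) ^ p)
        = ENNReal.ofReal (M^p) * ENNReal.ofReal ((if M < uE x then 0 else g x) ^ p)
          + ENNReal.ofReal ((if M < uE x then gE x else 0) ^ p) := by
      intro x
      by_cases hc : M < uE x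
      · simp only [if_pos hc]
        rw [mul_zero, zero_add, Real.zero_rpow hp0]
        simp
      · simp only [if_neg hc]
        rw [add_zero, Real.mul_rpow hM0.le (hg.2 x),
          ENNReal.ofReal_mul (Real.rpow_nonneg hM0.le p), Real.zero_rpow hp0]
        simp
    have hsplit2 : (∫⁻ x in Ω, ENNReal.ofReal ((M * (if M < uE x then 0 else g x)
          + (if M < uE x then gE x else 0)) ^ p) ∂μ)
        = ENNReal.ofReal (M^p) * Q + B' := by
      calc (∫⁻ x in Ω, ENNReal.ofReal ((M * (if M < uE x then 0 else g x)
            + (if M < uE x then gE x else 0)) ^ p) ∂μ)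
          = ∫⁻ x in Ω, (ENNReal.ofReal (M^p)
              * ENNReal.ofReal ((if M < uE x then 0 else g x) ^ p)
            + ENNReal.ofReal ((if M < uE x then gE x else 0) ^ p)) ∂μ :=
            lintegral_congr hpt
        _ = (∫⁻ x in Ω, ENNReal.ofReal (M^p)
              * ENNReal.ofReal ((if M < uE x then 0 else g x) ^ p) ∂μ)
            + ∫⁻ x in Ω, ENNReal.ofReal ((if M < uE x then gE x else 0) ^ p) ∂μ := by
            refine lintegral_split (μ.restrict Ω) hSmeas _ _ ?_ ?_
            · intro x hx
              have hx' : M < uE x := hx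
              rw [if_pos hx', Real.zero_rpow hp0]
              simp
            · intro x hx
              have hx' : ¬ M < uE x := hx
              rw [if_neg hx', Real.zero_rpow hp0]
              simp
        _ = ENNReal.ofReal (M^p) * Q + B' := by
            rw [lintegral_const_mul' _ _ ENNReal.ofReal_ne_top]
    rw [hsplit2, hB'val] at hkey
    have hKsplit : ENNReal.ofReal M * K + ENNReal.ofReal (1-M) * K = K := by
      rw [← add_mul, ← ENNReal.ofReal_add hM0.le (by linarith : (0:ℝ) ≤ 1-M)]
      norm_num
    have hkey2 : ENNReal.ofReal M * K + ENNReal.ofReal (1-M) * K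
        ≤ ENNReal.ofReal (M^p) * Q + ENNReal.ofReal (1-M) * K := by
      rw [hKsplit]
      exact hkey
    have hfin2 : ENNReal.ofReal (1-M) * K ≠ ⊤ :=
      ENNReal.mul_ne_top ENNReal.ofReal_ne_top hKfin
    have hcancel : ENNReal.ofReal M * K ≤ ENNReal.ofReal (M^p) * Q :=
      (ENNReal.add_le_add_iff_right (a := ENNReal.ofReal (1-M) * K) hfin2).mp hkey2
    have hmul := mul_le_mul_right hcancel (ENNReal.ofReal (M^(-p)))
    have hl : ENNReal.ofReal (M^(-p)) * (ENNReal.ofReal M * K)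
        = ENNReal.ofReal (M^(1-p)) * K := by
      rw [← mul_assoc, ← ENNReal.ofReal_mul (Real.rpow_nonneg hM0.le _)]
      congr 2
      rw [show (1:ℝ)-p = -p + 1 by ring, Real.rpow_add hM0, Real.rpow_one]
    have hr : ENNReal.ofReal (M^(-p)) * (ENNReal.ofReal (M^p) * Q) = Q := by
      rw [← mul_assoc, ← ENNReal.ofReal_mul (Real.rpow_nonneg hM0.le _),
        ← Real.rpow_add hM0]
      norm_num
    rw [hl, hr] at hmul
    refine le_trans hmul (lintegral_mono fun x => ?_)
    apply ENNReal.ofReal_le_ofReal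
    by_cases hc : M < uE x
    · rw [if_pos hc, Real.zero_rpow hp0]
      exact Real.rpow_nonneg (hg.2 x) p
    · rw [if_neg hc]
  exact le_antisymm hupper hlower
end

section
/- Let A, E ⊂ Ω with cap_p(A,Ω) > 0 and cap_p(E,Ω) < ∞, and let u_E be the capacitary potential of E in Ω. Then inf_A u_E ≤ (cap_p(E,Ω)/cap_p(A,Ω))^{1/(p-1)}. -/
open MeasureTheory Metric Set
open scoped ENNReal NNReal

section AuxiliaryLemmas

open scoped Topology

lemma interval_int_if {L M : ℝ} (hL : 0 ≤ L) {f ρ : ℝ → ℝ}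
    (hρint : IntervalIntegrable ρ volume 0 L) (hcf : ContinuousOn f (Icc 0 L))
    (hρ0 : ∀ t, 0 ≤ ρ t) :
    IntervalIntegrable (fun t => if f t < M then ρ t else 0) volume 0 L := by
  obtain ⟨O, hO, hOeq⟩ := (_root_.continuousOn_iff'.1 hcf) (Iio M) isOpen_Iio
  have hIsub : Set.uIoc (0:ℝ) L ⊆ Icc 0 L := by
    rw [Set.uIoc_of_le hL]; exact Ioc_subset_Icc_self
  have hiff : ∀ t ∈ Icc (0:ℝ) L, (t ∈ O ↔ f t < M) := by
    intro t htI
    constructor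
    · intro h
      have : t ∈ f ⁻¹' Iio M ∩ Icc 0 L := by rw [hOeq]; exact ⟨h, htI⟩
      exact this.1
    · intro h
      have : t ∈ O ∩ Icc 0 L := by rw [← hOeq]; exact ⟨h, htI⟩
      exact this.1
  have h1 : IntervalIntegrable (O.indicator ρ) volume 0 L := by
    refine hρint.mono_fun ?_ ?_
    · exact (hρint.1.aestronglyMeasurable.mono_measure
        (by rw [Set.uIoc_of_le hL])).indicator hO.measurableSet
    · refine Filter.Eventually.of_forall (fun t => ?_)
      by_cases ht : t ∈ O <;> simp [Set.indicator, ht, abs_nonneg]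
  refine h1.congr ?_
  refine fun t ht => ?_
  have htI : t ∈ Icc 0 L := hIsub ht
  by_cases h : f t < M
  · simp [Set.indicator, (hiff t htI).2 h, h]
  · have hnO : t ∉ O := fun hO' => h ((hiff t htI).1 hO')
    simp [Set.indicator, h, hnO]

lemma min_trunc_var {L M : ℝ} (hL : 0 ≤ L) {f ρ : ℝ → ℝ}
    (hρ0 : ∀ t, 0 ≤ ρ t) (hρint : IntervalIntegrable ρ volume 0 L)
    (hcf : ContinuousOn f (Icc 0 L))
    (hfg : ∀ s t, 0 ≤ s → s ≤ t → t ≤ L → |f t - f s| ≤ ∫ r in s..t, ρ r) :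
    |min (f L) M - min (f 0) M| ≤ ∫ t in (0:ℝ)..L, (if f t < M then ρ t else 0) := by
  set ψ : ℝ → ℝ := fun t => if f t < M then ρ t else 0 with hψdef
  have hψ0 : ∀ t, 0 ≤ ψ t := by
    intro t; simp only [hψdef]; split
    · exact hρ0 t
    · exact le_refl 0
  have hψint : IntervalIntegrable ψ volume 0 L := interval_int_if hL hρint hcf hρ0
  have hψsub : ∀ s t, 0 ≤ s → s ≤ t → t ≤ L → IntervalIntegrable ψ volume s t := by
    intro s t hs hst htL
    refine hψint.mono_set ?_
    rw [Set.uIcc_of_le hst, Set.uIcc_of_le hL]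
    exact Icc_subset_Icc hs htL
  -- the case where f < M everywhere on [0,L]
  by_cases hT : ∃ t ∈ Icc 0 L, M ≤ f t
  swap
  · push_neg at hT
    have h0 : f 0 < M := hT 0 ⟨le_refl 0, hL⟩
    have hLlt : f L < M := hT L ⟨hL, le_refl L⟩
    rw [min_eq_left h0.le, min_eq_left hLlt.le]
    calc |f L - f 0| ≤ ∫ r in (0:ℝ)..L, ρ r := hfg 0 L le_rfl hL le_rfl
    _ = ∫ t in (0:ℝ)..L, ψ t := by
        refine intervalIntegral.integral_congr (fun t ht => ?_)
        rw [Set.uIcc_of_le hL] at ht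
        simp [hψdef, hT t ht]
  · obtain ⟨t₀, ht₀, hft₀⟩ := hT
    set T : Set ℝ := {t | t ∈ Icc 0 L ∧ M ≤ f t} with hTdef
    have hTne : T.Nonempty := ⟨t₀, ht₀, hft₀⟩
    have hTsub : T ⊆ Icc 0 L := fun t ht => ht.1
    have hTclosed : IsClosed T := by
      obtain ⟨C, hC, hCeq⟩ := (continuousOn_iff_isClosed.1 hcf) (Ici M) isClosed_Ici
      have : T = C ∩ Icc 0 L := by
        rw [← hCeq]; ext t; simp [hTdef, Set.mem_preimage, and_comm]
      rw [this]; exact hC.inter isClosed_Icc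
    have hbddB : BddBelow T := (bddBelow_Icc : BddBelow (Icc (0:ℝ) L)).mono hTsub
    have hbddA : BddAbove T := (bddAbove_Icc (a := (0:ℝ)) (b := L)).mono hTsub
    set c₁ := sInf T with hc₁def
    set c₂ := sSup T with hc₂def
    have hc₁T : c₁ ∈ T := hTclosed.csInf_mem hTne hbddB
    have hc₂T : c₂ ∈ T := hTclosed.csSup_mem hTne hbddA
    have hc₁₂ : c₁ ≤ c₂ := csInf_le_csSup hTne hbddB hbddA
    have hc₁0 : 0 ≤ c₁ := hc₁T.1.1
    have hc₂L : c₂ ≤ L := hc₂T.1.2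
    -- first bound
    have b₁ : M - min (f 0) M ≤ ∫ r in (0:ℝ)..c₁, ψ r := by
      rcases le_or_gt M (f 0) with h0 | h0
      · rw [min_eq_right h0]
        simp only [sub_self]
        exact intervalIntegral.integral_nonneg hc₁0 (fun u _ => hψ0 u)
      · rw [min_eq_left h0.le]
        have hc₁pos : 0 < c₁ := by
          rcases eq_or_lt_of_le hc₁0 with h | h
          · exfalso; rw [← h] at hc₁T; exact absurd hc₁T.2 (not_le.2 h0)
          · exact h
        have hflt : ∀ r ∈ Ico 0 c₁, f r < M := by
          intro r hr
          by_contra hge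
          push_neg at hge
          have : r ∈ T := ⟨⟨hr.1, hr.2.le.trans (hc₁T.1.2)⟩, hge⟩
          exact absurd (csInf_le hbddB this) (not_le.2 hr.2)
        have hfc₁ : f c₁ = M := by
          refine le_antisymm ?_ hc₁T.2
          have hne : (𝓝[Ico 0 c₁] c₁).NeBot := by
            refine mem_closure_iff_nhdsWithin_neBot.1 ?_
            rw [closure_Ico hc₁pos.ne]
            exact ⟨hc₁0, le_refl c₁⟩
          have htend : Filter.Tendsto f (𝓝[Ico 0 c₁] c₁) (𝓝 (f c₁)) :=
            (hcf c₁ hc₁T.1).mono (fun r hr => ⟨hr.1, hr.2.le.trans hc₁T.1.2⟩)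
          exact le_of_tendsto htend (Filter.eventually_of_mem self_mem_nhdsWithin
            (fun r hr => (hflt r hr).le))
        calc M - f 0 = f c₁ - f 0 := by rw [hfc₁]
        _ ≤ |f c₁ - f 0| := le_abs_self _
        _ ≤ ∫ r in (0:ℝ)..c₁, ρ r := hfg 0 c₁ le_rfl hc₁0 hc₁T.1.2
        _ = ∫ r in (0:ℝ)..c₁, ψ r := by
            refine intervalIntegral.integral_congr_ae ?_
            have hone : ∀ᵐ x : ℝ, x ≠ c₁ := by
              have : (volume : Measure ℝ) {c₁} = 0 := measure_singleton c₁
              exact compl_mem_ae_iff.mpr this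
            filter_upwards [hone] with x hx hmem
            rw [Set.uIoc_of_le hc₁0] at hmem
            have hxI : x ∈ Ico 0 c₁ := ⟨hmem.1.le, lt_of_le_of_ne hmem.2 hx⟩
            simp [hψdef, hflt x hxI]
    -- second bound
    have b₂ : M - min (f L) M ≤ ∫ r in c₂..L, ψ r := by
      rcases le_or_gt M (f L) with h0 | h0
      · rw [min_eq_right h0]
        simp only [sub_self]
        exact intervalIntegral.integral_nonneg hc₂L (fun u _ => hψ0 u)
      · rw [min_eq_left h0.le]
        have hc₂lt : c₂ < L := by
          rcases eq_or_lt_of_le hc₂L with h | h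
          · exfalso; rw [h] at hc₂T; exact absurd hc₂T.2 (not_le.2 h0)
          · exact h
        have hflt : ∀ r ∈ Ioc c₂ L, f r < M := by
          intro r hr
          by_contra hge
          push_neg at hge
          have : r ∈ T := ⟨⟨hc₂T.1.1.trans hr.1.le, hr.2⟩, hge⟩
          exact absurd (le_csSup hbddA this) (not_le.2 hr.1)
        have hfc₂ : f c₂ = M := by
          refine le_antisymm ?_ hc₂T.2
          have hne : (𝓝[Ioc c₂ L] c₂).NeBot := by
            refine mem_closure_iff_nhdsWithin_neBot.1 ?_
            rw [closure_Ioc hc₂lt.ne]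
            exact ⟨le_refl c₂, hc₂L⟩
          have htend : Filter.Tendsto f (𝓝[Ioc c₂ L] c₂) (𝓝 (f c₂)) :=
            (hcf c₂ hc₂T.1).mono (fun r hr => ⟨hc₂T.1.1.trans hr.1.le, hr.2⟩)
          exact le_of_tendsto htend (Filter.eventually_of_mem self_mem_nhdsWithin
            (fun r hr => (hflt r hr).le))
        calc M - f L = -(f L - f c₂) := by rw [hfc₂]; ring
        _ ≤ |f L - f c₂| := neg_le_abs _
        _ ≤ ∫ r in c₂..L, ρ r := hfg c₂ L hc₂T.1.1 hc₂lt.le le_rfl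
        _ = ∫ r in c₂..L, ψ r := by
            refine intervalIntegral.integral_congr_ae ?_
            have hone : ∀ᵐ x : ℝ, x ≠ c₂ := by
              have : (volume : Measure ℝ) {c₂} = 0 := measure_singleton c₂
              exact compl_mem_ae_iff.mpr this
            filter_upwards [hone] with x hx hmem
            rw [Set.uIoc_of_le hc₂lt.le] at hmem
            have hxI : x ∈ Ioc c₂ L := hmem
            simp [hψdef, hflt x hxI]
    -- combine
    have hsplit : ∫ t in (0:ℝ)..L, ψ t
        = (∫ r in (0:ℝ)..c₁, ψ r) + (∫ r in c₁..c₂, ψ r) + (∫ r in c₂..L, ψ r) := by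
      rw [intervalIntegral.integral_add_adjacent_intervals
          (hψsub 0 c₁ le_rfl hc₁0 hc₁T.1.2) (hψsub c₁ c₂ hc₁0 hc₁₂ hc₂L),
        intervalIntegral.integral_add_adjacent_intervals
          (hψsub 0 c₂ le_rfl (hc₁0.trans hc₁₂) hc₂L) (hψsub c₂ L (hc₁0.trans hc₁₂) hc₂L le_rfl)]
    have hmid : 0 ≤ ∫ r in c₁..c₂, ψ r := intervalIntegral.integral_nonneg hc₁₂ (fun u _ => hψ0 u)
    have hminL : min (f L) M ≤ M := min_le_right _ _
    have hmin0 : min (f 0) M ≤ M := min_le_right _ _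
    have habs : |min (f L) M - min (f 0) M| ≤ (M - min (f 0) M) + (M - min (f L) M) := by
      rw [abs_le]; constructor <;> nlinarith
    calc |min (f L) M - min (f 0) M| ≤ (M - min (f 0) M) + (M - min (f L) M) := habs
    _ ≤ (∫ r in (0:ℝ)..c₁, ψ r) + (∫ r in c₂..L, ψ r) := add_le_add b₁ b₂
    _ ≤ (∫ r in (0:ℝ)..c₁, ψ r) + (∫ r in c₁..c₂, ψ r) + (∫ r in c₂..L, ψ r) := by linarith
    _ = ∫ t in (0:ℝ)..L, ψ t := hsplit.symm

variable {X : Type*} [MetricSpace X]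

lemma sub_hug {u g : X → ℝ} (hug : IsUpperGradient u g) {L : ℝ} {γ : ℝ → X}
    (hγ : LipschitzOnWith 1 γ (Set.Icc 0 L)) {s t : ℝ}
    (hs : 0 ≤ s) (hst : s ≤ t) (htL : t ≤ L) :
    |u (γ t) - u (γ s)| ≤ ∫ r in s..t, g (γ r) := by
  have hlip : LipschitzOnWith 1 (fun r => γ (s + r)) (Set.Icc 0 (t - s)) := by
    intro x hx y hy
    have hx' : s + x ∈ Icc 0 L := ⟨by linarith [hx.1], by linarith [hx.2]⟩
    have hy' : s + y ∈ Icc 0 L := ⟨by linarith [hy.1], by linarith [hy.2]⟩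
    have := hγ hx' hy'
    calc edist (γ (s + x)) (γ (s + y)) ≤ 1 * edist (s + x) (s + y) := this
    _ = 1 * edist x y := by rw [edist_add_left]
  have h := hug (t - s) (fun r => γ (s + r)) (by linarith) hlip
  simp only [add_sub_cancel, add_zero] at h
  calc |u (γ t) - u (γ s)| ≤ ∫ r in (0:ℝ)..(t-s), g (γ (s + r)) := h
  _ = ∫ r in s..t, g (γ r) := by
      rw [intervalIntegral.integral_comp_add_left (fun r => g (γ r)) s]
      norm_num

lemma cont_along {u g : X → ℝ} (hug : IsUpperGradient u g) {L : ℝ} {γ : ℝ → X}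
    (hL : 0 ≤ L) (hγ : LipschitzOnWith 1 γ (Set.Icc 0 L))
    (hρint : IntervalIntegrable (fun r => g (γ r)) volume 0 L) :
    ContinuousOn (fun t => u (γ t)) (Icc 0 L) := by
  set P : ℝ → ℝ := fun x => ∫ r in (0:ℝ)..x, g (γ r) with hP
  have hPc : ContinuousOn P (Icc 0 L) := by
    have := intervalIntegral.continuousOn_primitive_interval
      (f := fun r => g (γ r)) (a := 0) (b := L) (μ := volume) ?_
    · rwa [Set.uIcc_of_le hL] at this
    · rw [Set.uIcc_of_le hL]
      exact (integrableOn_Icc_iff_integrableOn_Ioc).2 hρint.1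
  intro x hx
  have hPx : ContinuousWithinAt P (Icc 0 L) x := hPc x hx
  rw [Metric.continuousWithinAt_iff] at hPx ⊢
  intro ε hε
  obtain ⟨δ, hδ, hδP⟩ := hPx ε hε
  refine ⟨δ, hδ, fun {y} hy hdy => ?_⟩
  have key : ∀ a b : ℝ, a ∈ Icc 0 L → b ∈ Icc 0 L → a ≤ b →
      dist (u (γ b)) (u (γ a)) ≤ dist (P b) (P a) := by
    intro a b ha hb hab
    have h1 : |u (γ b) - u (γ a)| ≤ ∫ r in a..b, g (γ r) :=
      sub_hug hug hγ ha.1 hab hb.2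
    have hsubint : ∀ a b : ℝ, 0 ≤ a → a ≤ b → b ≤ L →
        IntervalIntegrable (fun r => g (γ r)) volume a b := fun a b ha' hab' hbL =>
      hρint.mono_set (by rw [Set.uIcc_of_le hab', Set.uIcc_of_le hL]; exact Icc_subset_Icc ha' hbL)
    have h2 : (∫ r in a..b, g (γ r)) = P b - P a := by
      rw [hP]
      rw [eq_sub_iff_add_eq, add_comm,
        intervalIntegral.integral_add_adjacent_intervals
          (hsubint 0 a le_rfl ha.1 ha.2) (hsubint a b ha.1 hab hb.2)]
    rw [Real.dist_eq, Real.dist_eq]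
    calc |u (γ b) - u (γ a)| ≤ ∫ r in a..b, g (γ r) := h1
    _ = P b - P a := h2
    _ ≤ |P b - P a| := le_abs_self _
  rcases le_total x y with hxy | hxy
  · calc dist (u (γ y)) (u (γ x)) ≤ dist (P y) (P x) := key x y hx hy hxy
    _ < ε := hδP hy hdy
  · calc dist (u (γ y)) (u (γ x)) = dist (u (γ x)) (u (γ y)) := dist_comm _ _
    _ ≤ dist (P x) (P y) := key y x hy hx hxy
    _ = dist (P y) (P x) := dist_comm _ _
    _ < ε := hδP hy hdy


lemma main_ug {u g : X → ℝ} (hug : IsUpperGradient u g) (hg0 : ∀ x, 0 ≤ g x)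
    (M c₁ c₂ : ℝ) (hc₁ : 0 ≤ c₁) (hc₂ : 0 ≤ c₂) :
    IsUpperGradient (fun x => c₁ * min (u x) M + c₂ * max (u x - M) 0)
      (fun x => (if u x ≤ M then c₁ else c₂) * g x) := by
  intro L γ hL hγ
  set f : ℝ → ℝ := fun t => u (γ t) with hfdef
  set ρ : ℝ → ℝ := fun t => g (γ t) with hρdef
  have hρ0 : ∀ t, 0 ≤ ρ t := fun t => hg0 _
  set ψ : ℝ → ℝ := fun t => (if f t ≤ M then c₁ else c₂) * ρ t with hψdef
  have hψ0 : ∀ t, 0 ≤ ψ t := by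
    intro t; simp only [hψdef]
    split <;> [exact mul_nonneg hc₁ (hρ0 t); exact mul_nonneg hc₂ (hρ0 t)]
  show |(c₁ * min (f L) M + c₂ * max (f L - M) 0) - (c₁ * min (f 0) M + c₂ * max (f 0 - M) 0)|
      ≤ ∫ t in (0:ℝ)..L, ψ t
  by_cases hρint : IntervalIntegrable ρ volume 0 L
  swap
  · have h := hug L γ hL hγ
    rw [intervalIntegral.integral_undef hρint] at h
    have heq : u (γ L) = u (γ 0) := by
      have := abs_nonneg (u (γ L) - u (γ 0))
      have h0 : |u (γ L) - u (γ 0)| = 0 := le_antisymm h this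
      have := abs_eq_zero.1 h0
      linarith
    have hfeq : f L = f 0 := heq
    rw [hfeq, sub_self, abs_zero]
    exact intervalIntegral.integral_nonneg hL (fun t _ => hψ0 t)
  · have hcf : ContinuousOn f (Icc 0 L) := cont_along hug hL hγ hρint
    have hfg : ∀ s t, 0 ≤ s → s ≤ t → t ≤ L → |f t - f s| ≤ ∫ r in s..t, ρ r :=
      fun s t hs hst htL => sub_hug hug hγ hs hst htL
    -- claim 1 : min part
    have claim1 := min_trunc_var hL hρ0 hρint hcf hfg (M := M)
    -- claim 2 : max part via negation
    have hcf' : ContinuousOn (fun t => -f t) (Icc 0 L) := hcf.neg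
    have hfg' : ∀ s t, 0 ≤ s → s ≤ t → t ≤ L → |(-f t) - (-f s)| ≤ ∫ r in s..t, ρ r := by
      intro s t hs hst htL
      have : |(-f t) - (-f s)| = |f t - f s| := by rw [abs_sub_comm]; ring_nf
      rw [this]; exact hfg s t hs hst htL
    have claim2' := min_trunc_var hL hρ0 hρint hcf' hfg' (M := -M)
    have hmaxrw : ∀ a : ℝ, min (-a) (-M) = -(max (a - M) 0 + M) := by
      intro a
      have h : max (a - M) 0 = max a M - M := by
        rw [← max_sub_sub_right a M M, sub_self]
      rw [min_neg_neg, h]; ring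
    have claim2 : |max (f L - M) 0 - max (f 0 - M) 0|
        ≤ ∫ t in (0:ℝ)..L, (if M < f t then ρ t else 0) := by
      have h1 : |min (-f L) (-M) - min (-f 0) (-M)| = |max (f L - M) 0 - max (f 0 - M) 0| := by
        rw [hmaxrw (f L), hmaxrw (f 0)]
        rw [show -(max (f L - M) 0 + M) - -(max (f 0 - M) 0 + M)
            = -((max (f L - M) 0) - (max (f 0 - M) 0)) by ring, abs_neg]
      have h2 : (∫ t in (0:ℝ)..L, (if -f t < -M then ρ t else 0))
          = ∫ t in (0:ℝ)..L, (if M < f t then ρ t else 0) := by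
        refine intervalIntegral.integral_congr (fun t _ => ?_)
        simp [neg_lt_neg_iff]
      rw [← h1, ← h2]
      exact claim2'
    -- integrability of the pieces
    have hα : IntervalIntegrable (fun t => if f t < M then ρ t else 0) volume 0 L :=
      interval_int_if hL hρint hcf hρ0
    have hβ : IntervalIntegrable (fun t => if M < f t then ρ t else 0) volume 0 L := by
      have := interval_int_if (M := -M) hL hρint hcf' hρ0
      refine this.congr (fun t _ => ?_)
      simp [neg_lt_neg_iff]
    have hψint : IntervalIntegrable ψ volume 0 L := by
      have hle : IntervalIntegrable (fun t => if f t ≤ M then ρ t else 0) volume 0 L := by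
        have : (fun t => if f t ≤ M then ρ t else 0)
            = fun t => ρ t - (if M < f t then ρ t else 0) := by
          ext t; by_cases h : f t ≤ M
          · simp [h, not_lt.2 h]
          · simp [h, not_le.1 h]
        rw [this]; exact hρint.sub hβ
      have : ψ = fun t => c₁ * (if f t ≤ M then ρ t else 0) + c₂ * (if M < f t then ρ t else 0) := by
        ext t; simp only [hψdef]
        by_cases h : f t ≤ M
        · simp [h, not_lt.2 h]
        · simp [h, not_le.1 h]
      rw [this]
      exact (hle.const_mul c₁).add (hβ.const_mul c₂)
    -- pointwise inequality
    have hpt : ∀ t ∈ Icc (0:ℝ) L,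
        c₁ * (if f t < M then ρ t else 0) + c₂ * (if M < f t then ρ t else 0) ≤ ψ t := by
      intro t _
      simp only [hψdef]
      rcases lt_trichotomy (f t) M with h | h | h
      · simp [h, h.le, not_lt.2 h.le]
      · simp [h, le_refl]
        exact mul_nonneg hc₁ (hρ0 t)
      · simp [not_le.2 h, h, not_lt.2 h.le]
    calc |(c₁ * min (f L) M + c₂ * max (f L - M) 0) - (c₁ * min (f 0) M + c₂ * max (f 0 - M) 0)|
        = |c₁ * (min (f L) M - min (f 0) M) + c₂ * (max (f L - M) 0 - max (f 0 - M) 0)| := by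
          ring_nf
      _ ≤ |c₁ * (min (f L) M - min (f 0) M)| + |c₂ * (max (f L - M) 0 - max (f 0 - M) 0)| :=
          abs_add_le _ _
      _ = c₁ * |min (f L) M - min (f 0) M| + c₂ * |max (f L - M) 0 - max (f 0 - M) 0| := by
          rw [abs_mul, abs_mul, abs_of_nonneg hc₁, abs_of_nonneg hc₂]
      _ ≤ c₁ * (∫ t in (0:ℝ)..L, (if f t < M then ρ t else 0))
            + c₂ * (∫ t in (0:ℝ)..L, (if M < f t then ρ t else 0)) :=
          add_le_add (mul_le_mul_of_nonneg_left claim1 hc₁)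
            (mul_le_mul_of_nonneg_left claim2 hc₂)
      _ = ∫ t in (0:ℝ)..L, (c₁ * (if f t < M then ρ t else 0) + c₂ * (if M < f t then ρ t else 0)) := by
          rw [intervalIntegral.integral_add (hα.const_mul c₁) (hβ.const_mul c₂),
            intervalIntegral.integral_const_mul, intervalIntegral.integral_const_mul]
      _ ≤ ∫ t in (0:ℝ)..L, ψ t := by
          refine intervalIntegral.integral_mono_on hL ((hα.const_mul c₁).add (hβ.const_mul c₂))
            hψint hpt


lemma lsc_level_open {X : Type*} [MetricSpace X] {u : X → ℝ} {Ω : Set X} (hΩ : IsOpen Ω)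
    (hlsc : LowerSemicontinuousOn u Ω) (M : ℝ) : IsOpen {x | x ∈ Ω ∧ M < u x} := by
  rw [isOpen_iff_mem_nhds]
  intro x hx
  have h1 : LowerSemicontinuousWithinAt u Ω x := hlsc x hx.1
  have h2 : ∀ᶠ z in 𝓝 x, M < u z := by
    have := h1 M hx.2
    rwa [hΩ.nhdsWithin_eq hx.1] at this
  exact Filter.mem_of_superset (Filter.inter_mem (hΩ.mem_nhds hx.1) h2)
    (fun z hz => ⟨hz.1, hz.2⟩)

lemma lint_split {X : Type*} [MeasurableSpace X] (μ : Measure X) (F : X → ℝ≥0∞) {S T : Set X}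
    (hT : MeasurableSet T) (hd : Disjoint S T) :
    ∫⁻ x in S ∪ T, F x ∂μ = (∫⁻ x in S, F x ∂μ) + ∫⁻ x in T, F x ∂μ := by
  rw [Measure.restrict_union hd hT, lintegral_add_measure]

lemma energy_split {X : Type*} [MeasurableSpace X] (μ : Measure X) {p : ℝ} (hp : 0 < p)
    {g : X → ℝ} (hg0 : ∀ x, 0 ≤ g x) {c₁ c₂ : ℝ} (hc₁ : 0 ≤ c₁) (hc₂ : 0 ≤ c₂)
    {u : X → ℝ} (M : ℝ) {S T : Set X} (hS : MeasurableSet S) (hT : MeasurableSet T)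
    (hd : Disjoint S T)
    (hS' : ∀ x ∈ S, u x ≤ M) (hT' : ∀ x ∈ T, ¬ u x ≤ M) :
    ∫⁻ x in S ∪ T, ENNReal.ofReal (((if u x ≤ M then c₁ else c₂) * g x) ^ p) ∂μ
      = ENNReal.ofReal (c₁ ^ p) * (∫⁻ x in S, ENNReal.ofReal (g x ^ p) ∂μ)
        + ENNReal.ofReal (c₂ ^ p) * (∫⁻ x in T, ENNReal.ofReal (g x ^ p) ∂μ) := by
  rw [lint_split μ _ hT hd]
  congr 1
  · calc ∫⁻ x in S, ENNReal.ofReal (((if u x ≤ M then c₁ else c₂) * g x) ^ p) ∂μ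
        = ∫⁻ x in S, ENNReal.ofReal (c₁ ^ p) * ENNReal.ofReal (g x ^ p) ∂μ := by
          refine lintegral_congr_ae ((ae_restrict_iff' hS).2 (ae_of_all _ fun x hx => ?_))
          simp only [if_pos (hS' x hx), Real.mul_rpow hc₁ (hg0 x),
            ENNReal.ofReal_mul (show (0:ℝ) ≤ c₁ ^ p by positivity)]
    _ = ENNReal.ofReal (c₁ ^ p) * ∫⁻ x in S, ENNReal.ofReal (g x ^ p) ∂μ :=
      lintegral_const_mul' _ _ ENNReal.ofReal_ne_top
  · calc ∫⁻ x in T, ENNReal.ofReal (((if u x ≤ M then c₁ else c₂) * g x) ^ p) ∂μ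
        = ∫⁻ x in T, ENNReal.ofReal (c₂ ^ p) * ENNReal.ofReal (g x ^ p) ∂μ := by
          refine lintegral_congr_ae ((ae_restrict_iff' hT).2 (ae_of_all _ fun x hx => ?_))
          simp only [if_neg (hT' x hx), Real.mul_rpow hc₂ (hg0 x),
            ENNReal.ofReal_mul (show (0:ℝ) ≤ c₂ ^ p by positivity)]
    _ = ENNReal.ofReal (c₂ ^ p) * ∫⁻ x in T, ENNReal.ofReal (g x ^ p) ∂μ :=
      lintegral_const_mul' _ _ ENNReal.ofReal_ne_top

lemma opt_min {p m F P C : ℝ} (hp : 1 < p) (hm0 : 0 < m) (hm1 : m < 1)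
    (hF : 0 ≤ F) (hP : 0 ≤ P) (hC : C = F + P)
    (hIneq : ∀ a ∈ Icc (0:ℝ) 1, C ≤ (a/m)^p * F + ((1-a)/(1-m))^p * P) :
    F = m * C := by
  have h1m : (0:ℝ) < 1 - m := by linarith
  set G : ℝ → ℝ := fun a => (a/m)^p * F + ((1-a)/(1-m))^p * P with hGdef
  have hGm : G m = C := by
    simp only [hGdef, div_self hm0.ne', div_self h1m.ne', Real.one_rpow, one_mul]
    linarith
  have hloc : IsLocalMin G m := by
    have hmem : Icc (0:ℝ) 1 ∈ 𝓝 m := Icc_mem_nhds hm0 hm1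
    refine Filter.eventually_of_mem hmem (fun a ha => ?_)
    rw [hGm]
    exact hIneq a ha
  have hd1 : HasDerivAt (fun a : ℝ => (a/m)^p) (p/m) m := by
    have hinner : HasDerivAt (fun a : ℝ => a / m) (1 / m) m := by
      simpa using (hasDerivAt_id m).div_const m
    have h := hinner.rpow_const (p := p) (Or.inr hp.le)
    simp only [div_self hm0.ne', Real.one_rpow, mul_one] at h
    convert h using 1
    field_simp
  have hd2 : HasDerivAt (fun a : ℝ => ((1-a)/(1-m))^p) (-(p/(1-m))) m := by
    have hinner : HasDerivAt (fun a : ℝ => (1 - a) / (1-m)) (-1 / (1-m)) m := by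
      simpa using ((hasDerivAt_id m).const_sub 1).div_const (1-m)
    have h := hinner.rpow_const (p := p) (Or.inr hp.le)
    simp only [div_self h1m.ne', Real.one_rpow, mul_one] at h
    convert h using 1
    field_simp
  have hderiv : HasDerivAt G (p/m * F + (-(p/(1-m))) * P) m :=
    (hd1.mul_const F).add (hd2.mul_const P)
  have hzero := hloc.hasDerivAt_eq_zero hderiv
  have hp0 : (0:ℝ) < p := by linarith
  have hkey : F * (1 - m) = m * P := by
    have h := hzero
    field_simp at h
    nlinarith [h]
  rw [hC]
  nlinarith [hkey]

lemma varCap_le {X : Type*} [MetricSpace X] [MeasurableSpace X] (p : ℝ) (μ : Measure X)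
    (A Ω : Set X) {u g : X → ℝ}
    (hadm : (∀ x ∈ A, u x = 1) ∧ ∀ x ∉ Ω, u x = 0)
    (hg : IsUpperGradient u g ∧ ∀ x, 0 ≤ g x) :
    varCap p μ A Ω ≤ ∫⁻ x in Ω, ENNReal.ofReal (g x ^ p) ∂μ :=
  iInf_le_of_le u (iInf_le_of_le hadm (iInf_le_of_le g (iInf_le_of_le hg le_rfl)))


end AuxiliaryLemmas

/-- Lemma 5.1. If `A, E ⊆ Ω`, `cap_p(A,Ω) > 0` and `cap_p(E,Ω) < ∞`,
then the capacitary potential `u_E` of `E` in `Ω` satisfies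
`inf_A u_E ≤ (cap_p(E,Ω)/cap_p(A,Ω))^{1/(p-1)}`. -/
theorem inf_potential_le
    {X : Type*} [MetricSpace X] [MeasurableSpace X] [BorelSpace X] [CompleteSpace X]
    (μ : Measure X) (p : ℝ) (hp : 1 < p)
    (hunb : ¬ Bornology.IsBounded (Set.univ : Set X))
    (hdoub : IsDoubling μ) (hPI : SupportsPoincare p μ)
    (Ω : Set X) (hΩo : IsOpen Ω) (hΩb : Bornology.IsBounded Ω) (hΩne : Ω.Nonempty)
    (A E : Set X) (hA : A ⊆ Ω) (hE : E ⊆ Ω)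
    (hcapA : 0 < varCap p μ A Ω) (hcapE : varCap p μ E Ω < ⊤)
    (uE gE : X → ℝ)
    (hadm : (∀ x ∈ E, uE x = 1) ∧ ∀ x ∉ Ω, uE x = 0)
    (hug : IsUpperGradient uE gE) (hg0 : ∀ x, 0 ≤ gE x)
    (hlsc : LowerSemicontinuousOn uE Ω)
    (hmin : ∫⁻ x in Ω, ENNReal.ofReal (gE x ^ p) ∂μ = varCap p μ E Ω) :
    ENNReal.ofReal (sInf (uE '' A)) ≤ (varCap p μ E Ω / varCap p μ A Ω) ^ (1/(p-1)) := by
  classical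
  have hp0 : (0:ℝ) < p := lt_trans one_pos hp
  set m := sInf (uE '' A) with hmdef
  rcases le_or_gt m 0 with hm | hm
  · rw [ENNReal.ofReal_of_nonpos hm]
    exact zero_le
  have hbdd : BddBelow (uE '' A) := by
    by_contra hb
    have h0 := Real.sInf_of_not_bddBelow hb
    rw [← hmdef] at h0
    linarith
  have hge : ∀ x ∈ A, m ≤ uE x := fun x hx => csInf_le hbdd ⟨x, hx, rfl⟩
  set C := varCap p μ E Ω with hCdef
  set K := varCap p μ A Ω with hKdef
  have hCtop : C ≠ ⊤ := hcapE.ne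
  have hΩm : MeasurableSet Ω := hΩo.measurableSet
  -- level set machinery
  set T : ℝ → Set X := fun M => {x | x ∈ Ω ∧ M < uE x} with hTdef
  set S : ℝ → Set X := fun M => Ω \ T M with hSdef
  have hTmeas : ∀ M, MeasurableSet (T M) := fun M =>
    (lsc_level_open hΩo hlsc M).measurableSet
  have hSmeas : ∀ M, MeasurableSet (S M) := fun M => hΩm.diff (hTmeas M)
  have hTsub : ∀ M, T M ⊆ Ω := fun M x hx => hx.1
  have hUnion : ∀ M, S M ∪ T M = Ω := fun M => diff_union_of_subset (hTsub M)
  have hdisj : ∀ M, Disjoint (S M) (T M) := fun M => disjoint_sdiff_left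
  have hSle : ∀ M, ∀ x ∈ S M, uE x ≤ M := by
    intro M x hx
    by_contra h
    exact hx.2 ⟨hx.1, not_le.1 h⟩
  have hTgt : ∀ M, ∀ x ∈ T M, ¬ uE x ≤ M := fun M x hx => not_le.2 hx.2
  set φ : ℝ → ℝ≥0∞ := fun M => ∫⁻ x in S M, ENNReal.ofReal (gE x ^ p) ∂μ with hφdef
  set ψ : ℝ → ℝ≥0∞ := fun M => ∫⁻ x in T M, ENNReal.ofReal (gE x ^ p) ∂μ with hψdef
  have hsum : ∀ M, φ M + ψ M = C := by
    intro M
    rw [hφdef, hψdef]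
    rw [← lint_split μ _ (hTmeas M) (hdisj M), hUnion M, hmin]
  have hφle : ∀ M, φ M ≤ C := fun M => (hsum M) ▸ le_self_add
  have hψle : ∀ M, ψ M ≤ C := fun M => (hsum M) ▸ le_add_self
  have hφtop : ∀ M, φ M ≠ ⊤ := fun M => ((hφle M).trans_lt hcapE).ne
  have hψtop : ∀ M, ψ M ≠ ⊤ := fun M => ((hψle M).trans_lt hcapE).ne
  -- competitor bound for E (uses minimality hmin)
  have hcomp : ∀ M c₁ c₂ : ℝ, 0 < M → M ≤ 1 → 0 ≤ c₁ → 0 ≤ c₂ →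
      c₁ * M + c₂ * (1 - M) = 1 →
      C ≤ ENNReal.ofReal (c₁ ^ p) * φ M + ENNReal.ofReal (c₂ ^ p) * ψ M := by
    intro M c₁ c₂ hM0 hM1 hc₁ hc₂ hsum1
    have hadm' : (∀ x ∈ E, (c₁ * min (uE x) M + c₂ * max (uE x - M) 0) = 1)
        ∧ ∀ x ∉ Ω, (c₁ * min (uE x) M + c₂ * max (uE x - M) 0) = 0 := by
      constructor
      · intro x hx
        rw [hadm.1 x hx, min_eq_right hM1, max_eq_left (by linarith)]
        linarith
      · intro x hx
        rw [hadm.2 x hx, min_eq_left hM0.le, max_eq_right (by linarith)]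
        ring
    have hle := varCap_le p μ E Ω hadm'
      ⟨main_ug hug hg0 M c₁ c₂ hc₁ hc₂, fun x => by
        by_cases h : uE x ≤ M <;> simp only [h, if_true, if_false]
        · exact mul_nonneg hc₁ (hg0 x)
        · exact mul_nonneg hc₂ (hg0 x)⟩
    rw [← hCdef] at hle
    calc C ≤ ∫⁻ x in Ω, ENNReal.ofReal (((if uE x ≤ M then c₁ else c₂) * gE x) ^ p) ∂μ := hle
    _ = ENNReal.ofReal (c₁ ^ p) * φ M + ENNReal.ofReal (c₂ ^ p) * ψ M := by
        rw [← hUnion M]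
        exact energy_split μ hp0 hg0 hc₁ hc₂ M (hSmeas M) (hTmeas M) (hdisj M)
          (hSle M) (hTgt M)
  -- admissible-for-A bound
  have hK : ∀ M : ℝ, 0 < M → M ≤ m → K ≤ ENNReal.ofReal ((1/M) ^ p) * φ M := by
    intro M hM0 hMm
    have hadm' : (∀ x ∈ A, ((1/M) * min (uE x) M + 0 * max (uE x - M) 0) = 1)
        ∧ ∀ x ∉ Ω, ((1/M) * min (uE x) M + 0 * max (uE x - M) 0) = 0 := by
      constructor
      · intro x hx
        rw [min_eq_right ((hMm.trans (hge x hx)))]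
        field_simp; ring
      · intro x hx
        rw [hadm.2 x hx, min_eq_left hM0.le]
        ring
    have hle := varCap_le p μ A Ω hadm'
      ⟨main_ug hug hg0 M (1/M) 0 (by positivity) le_rfl, fun x => by
        by_cases h : uE x ≤ M <;> simp only [h, if_true, if_false]
        · exact mul_nonneg (by positivity) (hg0 x)
        · exact mul_nonneg le_rfl (hg0 x)⟩
    rw [← hKdef] at hle
    calc K ≤ ∫⁻ x in Ω, ENNReal.ofReal (((if uE x ≤ M then (1/M) else 0) * gE x) ^ p) ∂μ := hle
    _ = ENNReal.ofReal ((1/M) ^ p) * φ M + ENNReal.ofReal ((0:ℝ) ^ p) * ψ M := by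
        rw [← hUnion M]
        exact energy_split μ hp0 hg0 (by positivity) le_rfl M (hSmeas M) (hTmeas M) (hdisj M)
          (hSle M) (hTgt M)
    _ = ENNReal.ofReal ((1/M) ^ p) * φ M := by
        rw [Real.zero_rpow hp0.ne', ENNReal.ofReal_zero, zero_mul, add_zero]
  have hpexp : (0:ℝ) ≤ 1/(p-1) := by
    rw [one_div]; exact inv_nonneg.2 (by linarith)
  rcases lt_trichotomy m 1 with hm1 | hm1 | hm1
  · -- main case 0 < m < 1
    set F := (φ m).toReal with hFdef
    set Pr := (ψ m).toReal with hPrdef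
    set Cr := C.toReal with hCrdef
    have hsumR : Cr = F + Pr := by
      rw [hFdef, hPrdef, hCrdef, ← hsum m, ENNReal.toReal_add (hφtop m) (hψtop m)]
    have hIneq : ∀ a ∈ Icc (0:ℝ) 1, Cr ≤ (a/m)^p * F + ((1-a)/(1-m))^p * Pr := by
      intro a ha
      have h1m : (0:ℝ) < 1 - m := by linarith
      have hc₁ : 0 ≤ a/m := div_nonneg ha.1 hm.le
      have hc₂ : 0 ≤ (1-a)/(1-m) := div_nonneg (by linarith [ha.2]) h1m.le
      have hsum1 : (a/m) * m + ((1-a)/(1-m)) * (1 - m) = 1 := by field_simp; ring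
      have h := hcomp m (a/m) ((1-a)/(1-m)) hm hm1.le hc₁ hc₂ hsum1
      have hfin1 : ENNReal.ofReal ((a/m) ^ p) * φ m ≠ ⊤ :=
        ENNReal.mul_ne_top ENNReal.ofReal_ne_top (hφtop m)
      have hfin2 : ENNReal.ofReal (((1-a)/(1-m)) ^ p) * ψ m ≠ ⊤ :=
        ENNReal.mul_ne_top ENNReal.ofReal_ne_top (hψtop m)
      have h2 := ENNReal.toReal_mono (ENNReal.add_ne_top.2 ⟨hfin1, hfin2⟩) h
      rw [ENNReal.toReal_add hfin1 hfin2, ENNReal.toReal_mul, ENNReal.toReal_mul,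
        ENNReal.toReal_ofReal (by positivity), ENNReal.toReal_ofReal (by positivity)] at h2
      exact h2
    have hFeq : F = m * Cr :=
      opt_min hp hm hm1 ENNReal.toReal_nonneg ENNReal.toReal_nonneg hsumR hIneq
    have hφm : φ m = ENNReal.ofReal m * C := by
      rw [← ENNReal.ofReal_toReal (hφtop m), ← hFdef, hFeq, ENNReal.ofReal_mul hm.le,
        hCrdef, ENNReal.ofReal_toReal hCtop]
    have hKC : K ≤ ENNReal.ofReal ((1/m)^p) * (ENNReal.ofReal m * C) := by
      rw [← hφm]; exact hK m hm le_rfl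
    set t := ENNReal.ofReal m with htdef
    have hprod : m ^ (p-1) * ((1/m) ^ p * m) = 1 := by
      have e1 : (1/m : ℝ) ^ p = m ^ (-p) := by
        rw [one_div, Real.inv_rpow hm.le, ← Real.rpow_neg hm.le]
      calc m ^ (p-1) * ((1/m) ^ p * m) = m ^ (p-1) * m ^ (-p) * m ^ (1:ℝ) := by
            rw [e1, Real.rpow_one]; ring
      _ = m ^ ((p-1) + (-p) + 1) := by rw [← Real.rpow_add hm, ← Real.rpow_add hm]
      _ = 1 := by rw [show (p-1) + (-p) + 1 = (0:ℝ) by ring, Real.rpow_zero]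
    have h1 : t ^ (p-1) = ENNReal.ofReal (m ^ (p-1)) := ENNReal.ofReal_rpow_of_pos hm
    have hmain : t ^ (p-1) * K ≤ C := by
      calc t ^ (p-1) * K
          ≤ t ^ (p-1) * (ENNReal.ofReal ((1/m)^p) * (ENNReal.ofReal m * C)) :=
            mul_le_mul_right hKC _
      _ = ENNReal.ofReal (m^(p-1) * ((1/m)^p * m)) * C := by
          rw [h1, ENNReal.ofReal_mul (by positivity), ENNReal.ofReal_mul (by positivity)]
          ring
      _ = C := by rw [hprod, ENNReal.ofReal_one, one_mul]
    have htne : t ^ (p-1) ≠ 0 := by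
      rw [h1]
      exact (ENNReal.ofReal_pos.2 (Real.rpow_pos_of_pos hm (p-1))).ne'
    have hKtop : K ≠ ⊤ := by
      intro hKt
      rw [hKt, ENNReal.mul_top htne] at hmain
      exact hCtop (top_le_iff.1 hmain)
    have hdiv : t ^ (p-1) ≤ C / K :=
      (ENNReal.le_div_iff_mul_le (Or.inl hcapA.ne') (Or.inl hKtop)).2 hmain
    have h2 : (t ^ (p-1)) ^ (1/(p-1)) = t := by
      rw [← ENNReal.rpow_mul, mul_one_div, div_self (by linarith : p - 1 ≠ 0),
        ENNReal.rpow_one]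
    calc ENNReal.ofReal m = (t ^ (p-1)) ^ (1/(p-1)) := h2.symm
    _ ≤ (C/K)^(1/(p-1)) := ENNReal.rpow_le_rpow hdiv hpexp
  · -- case m = 1
    have hKle : K ≤ φ 1 := by
      have h := hK 1 one_pos (le_of_eq hm1.symm)
      simpa [Real.one_rpow] using h
    have hKC : K ≤ C := hKle.trans (hφle 1)
    have hKtop : K ≠ ⊤ := (hKC.trans_lt hcapE).ne
    have h1 : (1:ℝ≥0∞) ≤ C / K :=
      (ENNReal.le_div_iff_mul_le (Or.inl hcapA.ne') (Or.inl hKtop)).2 (by rwa [one_mul])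
    rw [hm1, ENNReal.ofReal_one]
    calc (1:ℝ≥0∞) = 1 ^ (1/(p-1)) := (ENNReal.one_rpow _).symm
    _ ≤ (C/K)^(1/(p-1)) := ENNReal.rpow_le_rpow h1 hpexp
  · -- case m > 1 : contradiction
    exfalso
    have hstep1 : C ≤ φ 1 := by
      have h := hcomp 1 1 0 one_pos le_rfl zero_le_one le_rfl (by ring)
      simpa [Real.one_rpow, Real.zero_rpow hp0.ne'] using h
    have hψ1 : ψ 1 = 0 := by
      by_contra hne
      have hlt : φ 1 < φ 1 + ψ 1 := ENNReal.lt_add_right (hφtop 1) hne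
      rw [hsum 1] at hlt
      exact absurd hstep1 (not_le.2 hlt)
    set u₁ : X → ℝ := fun x => 0 * min (uE x) 1 + 1 * max (uE x - 1) 0 with hu₁
    set g₁ : X → ℝ := fun x => (if uE x ≤ 1 then (0:ℝ) else 1) * gE x with hg₁
    have hug₁ : IsUpperGradient u₁ g₁ := main_ug hug hg0 1 0 1 le_rfl zero_le_one
    have hg₁0 : ∀ x, 0 ≤ g₁ x := fun x => by
      rw [hg₁]; by_cases h : uE x ≤ 1 <;> simp [h, hg0 x]
    have hm1' : (0:ℝ) < m - 1 := by linarith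
    have hadm' : (∀ x ∈ A, ((1/(m-1)) * min (u₁ x) (m-1) + 0 * max (u₁ x - (m-1)) 0) = 1)
        ∧ ∀ x ∉ Ω, ((1/(m-1)) * min (u₁ x) (m-1) + 0 * max (u₁ x - (m-1)) 0) = 0 := by
      constructor
      · intro x hx
        have hux : m ≤ uE x := hge x hx
        have h1 : u₁ x = uE x - 1 := by
          rw [hu₁]
          simp only [zero_mul, one_mul, zero_add]
          exact max_eq_left (by linarith)
        rw [h1, min_eq_right (by linarith)]
        field_simp; ring
      · intro x hx
        have h0 : uE x = 0 := hadm.2 x hx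
        have h1 : u₁ x = 0 := by
          rw [hu₁]
          simp only [h0, zero_mul, one_mul, zero_add, zero_sub]
          exact max_eq_right (by norm_num)
        rw [h1, min_eq_left hm1'.le]
        ring
    have hle := varCap_le p μ A Ω hadm'
      ⟨main_ug hug₁ hg₁0 (m-1) (1/(m-1)) 0 (by positivity) le_rfl, fun x => by
        by_cases h : u₁ x ≤ m - 1 <;> simp only [h, if_true, if_false]
        · exact mul_nonneg (by positivity) (hg₁0 x)
        · exact mul_nonneg le_rfl (hg₁0 x)⟩
    rw [← hKdef] at hle
    set W : X → ℝ≥0∞ :=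
      fun x => ENNReal.ofReal (((if u₁ x ≤ m-1 then (1/(m-1)) else 0) * g₁ x) ^ p) with hW
    have hsplit : ∫⁻ x in Ω, W x ∂μ = (∫⁻ x in S 1, W x ∂μ) + ∫⁻ x in T 1, W x ∂μ := by
      rw [← hUnion 1, lint_split μ _ (hTmeas 1) (hdisj 1)]
    have hS0 : (∫⁻ x in S 1, W x ∂μ) = 0 := by
      have hae : ∀ᵐ x ∂(μ.restrict (S 1)), W x = 0 := by
        refine (ae_restrict_iff' (hSmeas 1)).2 (ae_of_all _ fun x hx => ?_)
        have hgx : g₁ x = 0 := by rw [hg₁]; simp [if_pos (hSle 1 x hx)]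
        rw [hW]
        simp only [hgx, mul_zero, Real.zero_rpow hp0.ne', ENNReal.ofReal_zero]
      rw [lintegral_congr_ae hae, lintegral_zero]
    have hT0 : (∫⁻ x in T 1, W x ∂μ) ≤ ENNReal.ofReal ((1/(m-1))^p) * ψ 1 := by
      have hstep : ∀ x ∈ T 1, W x ≤ ENNReal.ofReal ((1/(m-1))^p) * ENNReal.ofReal (gE x ^ p) := by
        intro x hx
        have hg₁x : g₁ x = gE x := by rw [hg₁]; simp [if_neg (hTgt 1 x hx)]
        have hw : (if u₁ x ≤ m-1 then (1/(m-1)) else (0:ℝ)) ≤ 1/(m-1) := by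
          split
          · exact le_rfl
          · positivity
        have hw0 : (0:ℝ) ≤ (if u₁ x ≤ m-1 then (1/(m-1)) else (0:ℝ)) := by
          split
          · positivity
          · exact le_rfl
        simp only [hW, hg₁x]
        calc ENNReal.ofReal (((if u₁ x ≤ m-1 then (1/(m-1)) else 0) * gE x) ^ p)
            ≤ ENNReal.ofReal ((1/(m-1) * gE x) ^ p) :=
              ENNReal.ofReal_le_ofReal (Real.rpow_le_rpow
                (mul_nonneg hw0 (hg0 x)) (mul_le_mul_of_nonneg_right hw (hg0 x)) hp0.le)
        _ = ENNReal.ofReal ((1/(m-1))^p) * ENNReal.ofReal (gE x ^ p) := by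
            rw [Real.mul_rpow (by positivity) (hg0 x),
              ENNReal.ofReal_mul (by positivity)]
      calc ∫⁻ x in T 1, W x ∂μ
          ≤ ∫⁻ x in T 1, ENNReal.ofReal ((1/(m-1))^p) * ENNReal.ofReal (gE x ^ p) ∂μ :=
            lintegral_mono_ae ((ae_restrict_iff' (hTmeas 1)).2 (ae_of_all _ hstep))
      _ = ENNReal.ofReal ((1/(m-1))^p) * ψ 1 := lintegral_const_mul' _ _ ENNReal.ofReal_ne_top
    have hK0 : K = 0 := by
      refine le_antisymm ?_ zero_le
      calc K ≤ ∫⁻ x in Ω, W x ∂μ := hle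
      _ = (∫⁻ x in S 1, W x ∂μ) + ∫⁻ x in T 1, W x ∂μ := hsplit
      _ ≤ 0 + ENNReal.ofReal ((1/(m-1))^p) * ψ 1 := add_le_add hS0.le hT0
      _ = 0 := by rw [hψ1, mul_zero, zero_add]
    exact hcapA.ne' hK0
end

section
/- Suppose an open set U in a metric space X satisfies the interior corkscrew condition with parameters κ ∈ (0,1), 0 and R₂, and let 0 < ε < κR₂/2. Then U ⊂ U_ε[2ε/κ], where U_ε[ρ] = {x ∈ X : dist(x, U_ε) < ρ} is the ρ-neighborhood of the ε-interior U_ε of U. -/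
open Metric Set

/-- `U` satisfies the interior corkscrew condition with parameters `κ`, `R₁`, `R₂`:
for every `x ∈ U` and `R₁ < r < R₂`, the set `U ∩ B(x,r)` contains a ball of
radius `κr`. -/
def Corkscrew {X : Type*} [MetricSpace X] (U : Set X) (κ R₁ R₂ : ℝ) : Prop :=
  ∀ x ∈ U, ∀ r : ℝ, R₁ < r → r < R₂ → ∃ y : X, ball y (κ*r) ⊆ U ∩ ball x r

/-- The `ε`-interior of `U`. -/
noncomputable def epsInterior {X : Type*} [MetricSpace X] (U : Set X) (ε : ℝ) : Set X :=
  {x ∈ U | ε < Metric.infDist x Uᶜ}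

/-- Lemma 6.3 (ii). If `U` satisfies the interior corkscrew condition
with parameters `κ, 0, R₂` and `0 < ε < κR₂/2`, then `U ⊆ U_ε[2ε/κ]`, the
`(2ε/κ)`-neighborhood of the `ε`-interior of `U`. -/
theorem subset_neighborhood_epsInterior {X : Type*} [MetricSpace X]
    (U : Set X) (hU : IsOpen U) (κ R₂ : ℝ) (hκ0 : 0 < κ) (hκ1 : κ < 1)
    (hck : Corkscrew U κ 0 R₂) (ε : ℝ) (hε0 : 0 < ε) (hε : ε < κ*R₂/2) :
    U ⊆ {x : X | Metric.infDist x (epsInterior U ε) < 2*ε/κ} := by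
  intro x hx
  have hrpos : 0 < 2*ε/κ := by positivity
  have hrR₂ : 2*ε/κ < R₂ := by
    rw [div_lt_iff₀ hκ0]
    nlinarith
  obtain ⟨y, hy⟩ := hck x hx (2*ε/κ) hrpos hrR₂
  have hκr : κ * (2*ε/κ) = 2*ε := by field_simp
  rw [hκr] at hy
  have hyball : y ∈ ball y (2*ε) := mem_ball_self (by linarith)
  have hyU : y ∈ U := (hy hyball).1
  have hyx : dist x y < 2*ε/κ := by
    have := (hy hyball).2
    rw [mem_ball] at this
    rwa [dist_comm]
  rcases eq_empty_or_nonempty Uᶜ with hUc | hUc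
  · have hE : epsInterior U ε = ∅ := by
      ext z
      simp only [epsInterior, mem_setOf_eq, mem_empty_iff_false, iff_false, not_and]
      intro _
      rw [hUc, Metric.infDist_empty]
      linarith
    simp only [mem_setOf_eq, hE, Metric.infDist_empty]
    exact hrpos
  · have hyE : y ∈ epsInterior U ε := by
      refine ⟨hyU, ?_⟩
      by_contra h
      push_neg at h
      have : Metric.infDist y Uᶜ < 2*ε := by linarith
      obtain ⟨z, hz, hdz⟩ := (Metric.infDist_lt_iff hUc).mp this
      exact hz (hy (mem_ball'.mpr hdz)).1
    calc Metric.infDist x (epsInterior U ε) ≤ dist x y :=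
          Metric.infDist_le_dist_of_mem hyE
      _ < 2*ε/κ := hyx
end

section
/- Let U be a bounded c_J-John domain in a metric space X with 0 < c_J ≤ 1. Then U satisfies the interior corkscrew condition with parameters κ = c_J²/4, 0, and diam(U): for every x ∈ U and every 0 < r < diam(U), the set U ∩ B(x,r) contains an open ball of radius c_J²r/4. -/
open Metric Set

/-- `U` is a `c`-John domain with John center `z`: every `x ∈ U` connects to `z` by a
rectifiable curve `γ : [0,1] → U` such that `c · ℓ(γ|[0,t]) ≤ dist(γ t, X∖U)` for all
`t ∈ [0,1]`, where `ℓ` denotes arc length (total variation). -/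
def IsJohnWith {X : Type*} [MetricSpace X] (c : ℝ) (U : Set X) (z : X) : Prop :=
  z ∈ U ∧ ∀ x ∈ U, ∃ γ : ℝ → X, ContinuousOn γ (Set.Icc 0 1) ∧
    γ 0 = x ∧ γ 1 = z ∧ (∀ t ∈ Set.Icc (0:ℝ) 1, γ t ∈ U) ∧
    eVariationOn γ (Set.Icc 0 1) ≠ ⊤ ∧
    ∀ t ∈ Set.Icc (0:ℝ) 1,
      c * (eVariationOn γ (Set.Icc 0 t)).toReal ≤ Metric.infDist (γ t) Uᶜ

/-- `U` is a `c`-John domain. -/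
def IsJohnDomain {X : Type*} [MetricSpace X] (c : ℝ) (U : Set X) : Prop :=
  ∃ z : X, IsJohnWith c U z

private lemma ball_subset_of_le_infDist {X : Type*} [MetricSpace X] {U : Set X} {y : X} {d : ℝ}
    (h : d ≤ Metric.infDist y Uᶜ) : ball y d ⊆ U := by
  intro w hw
  by_contra hwU
  have h1 : Metric.infDist y Uᶜ ≤ dist y w := Metric.infDist_le_dist_of_mem hwU
  rw [mem_ball, dist_comm] at hw
  linarith

/-- Lemma 8.11. A bounded `c_J`-John domain satisfies the interior
corkscrew condition with parameters `c_J²/4`, `0` and `diam(U)`: for every `x ∈ U` and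
`0 < r < diam(U)`, `U ∩ B(x,r)` contains an open ball of radius `c_J²r/4`. -/
theorem john_corkscrew {X : Type*} [MetricSpace X]
    (c : ℝ) (hc0 : 0 < c) (hc1 : c ≤ 1)
    (U : Set X) (hUo : IsOpen U) (hUc : IsConnected U)
    (hUb : Bornology.IsBounded U) (hUne : Uᶜ.Nonempty)
    (hJ : IsJohnDomain c U) :
    ∀ x ∈ U, ∀ r : ℝ, 0 < r → r < Metric.diam U →
      ∃ y : X, ball y (c^2*r/4) ⊆ U ∩ ball x r := by
  obtain ⟨z, hzU, hJ'⟩ := hJ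
  intro x hx r hr hrd
  have hcc : c ^ 2 * r / 4 ≤ c * (r / 2) := by nlinarith [mul_nonneg hc0.le hr.le, mul_le_mul_of_nonneg_right hc1 (mul_nonneg hc0.le hr.le)]
  have hc2 : c ^ 2 * r / 4 ≤ r / 4 := by nlinarith
  -- The John center is far from the complement:
  have hcenter : c * (r / 2) ≤ Metric.infDist z Uᶜ := by
    obtain ⟨a, ha, b, hb, hab⟩ : ∃ a ∈ U, ∃ b ∈ U, r < dist a b := by
      by_contra h
      push_neg at h
      exact absurd (Metric.diam_le_of_forall_dist_le hr.le fun a ha b hb => h a ha b hb)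
        (not_le.mpr hrd)
    have key : ∀ w ∈ U, c * dist w z ≤ Metric.infDist z Uᶜ := by
      intro w hw
      obtain ⟨γ, hcont, h0, h1, hmem, hfin, hineq⟩ := hJ' w hw
      have h1' := hineq 1 (by norm_num)
      rw [h1] at h1'
      have hdist : dist w z ≤ (eVariationOn γ (Icc 0 1)).toReal := by
        rw [← h0, ← h1, dist_edist]
        exact ENNReal.toReal_mono hfin
          (eVariationOn.edist_le γ (by norm_num : (0:ℝ) ∈ Icc (0:ℝ) 1)
            (by norm_num : (1:ℝ) ∈ Icc (0:ℝ) 1))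
      calc c * dist w z ≤ c * (eVariationOn γ (Icc 0 1)).toReal :=
            mul_le_mul_of_nonneg_left hdist hc0.le
        _ ≤ _ := h1'
    rcases le_or_gt (r / 2) (dist a z) with h | h
    · calc c * (r / 2) ≤ c * dist a z := mul_le_mul_of_nonneg_left h hc0.le
        _ ≤ _ := key a ha
    · have hbz : r / 2 ≤ dist b z := by
        have h1 := dist_triangle a z b
        have h2 : dist z b = dist b z := dist_comm z b
        linarith
      calc c * (r / 2) ≤ c * dist b z := mul_le_mul_of_nonneg_left hbz hc0.le
        _ ≤ _ := key b hb
  obtain ⟨γ, hcont, h0, h1, hmem, hfin, hineq⟩ := hJ' x hx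
  set s : ℝ → ℝ := fun t => (eVariationOn γ (Icc 0 t)).toReal with hs
  have hfin' : ∀ t ∈ Icc (0:ℝ) 1, eVariationOn γ (Icc 0 t) ≠ ⊤ := fun t ht =>
    ne_top_of_le_ne_top hfin (eVariationOn.mono γ (Icc_subset_Icc le_rfl ht.2))
  have hdists : ∀ t ∈ Icc (0:ℝ) 1, dist x (γ t) ≤ s t := by
    intro t ht
    rw [← h0, dist_edist]
    exact ENNReal.toReal_mono (hfin' t ht)
      (eVariationOn.edist_le γ ⟨le_rfl, ht.1⟩ ⟨ht.1, le_rfl⟩)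
  have hs0 : s 0 = 0 := by
    have : eVariationOn γ (Icc (0:ℝ) 0) = 0 :=
      eVariationOn.subsingleton γ (by rw [Icc_self]; exact Set.subsingleton_singleton)
    simp [hs, this]
  rcases le_or_gt (s 1) (r / 2) with hL | hL
  · -- short curve: use the center z
    refine ⟨z, fun w hw => ?_⟩
    refine ⟨ball_subset_of_le_infDist (le_trans hcc hcenter) hw, ?_⟩
    rw [mem_ball] at hw ⊢
    have hxz : dist x z ≤ r / 2 := by
      have := hdists 1 (by norm_num)
      rw [h1] at this
      linarith
    have ht1 := dist_triangle w z x
    have ht2 : dist z x = dist x z := dist_comm z x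
    linarith
  · -- long curve: stop when arc length reaches r/2
    set T : Set ℝ := {t | t ∈ Icc (0:ℝ) 1 ∧ s t ≤ r / 2} with hT
    have hT0 : (0:ℝ) ∈ T := ⟨⟨le_rfl, zero_le_one⟩, by rw [hs0]; linarith⟩
    have hTbdd : BddAbove T := ⟨1, fun t ht => ht.1.2⟩
    set t₀ := sSup T with ht₀
    have ht₀mem : t₀ ∈ Icc (0:ℝ) 1 :=
      ⟨le_csSup hTbdd hT0, csSup_le ⟨0, hT0⟩ fun t ht => ht.1.2⟩
    have hcont₀ : ContinuousWithinAt γ (Icc 0 1) t₀ := hcont t₀ ht₀mem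
    rw [Metric.continuousWithinAt_iff] at hcont₀
    have hgt : ∀ t ∈ Icc (0:ℝ) 1, t₀ < t → c * (r / 2) ≤ Metric.infDist (γ t) Uᶜ := by
      intro t ht htgt
      have hnot : ¬ s t ≤ r / 2 := fun hle =>
        absurd (le_csSup hTbdd ⟨ht, hle⟩) (not_le.mpr htgt)
      push_neg at hnot
      have h2 := hineq t ht
      nlinarith
    have hi : c * (r / 2) ≤ Metric.infDist (γ t₀) Uᶜ := by
      rcases lt_or_ge (r / 2) (s t₀) with h | h
      · have h2 := hineq t₀ ht₀mem
        nlinarith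
      · have ht₀lt : t₀ < 1 :=
          lt_of_le_of_ne ht₀mem.2 (fun he => by rw [he] at h; linarith)
        by_contra hcon
        push_neg at hcon
        obtain ⟨δ, hδ, hδ'⟩ := hcont₀ (c * (r / 2) - Metric.infDist (γ t₀) Uᶜ) (by linarith)
        set t := min (t₀ + δ / 2) 1 with htdef
        have htmem : t ∈ Icc (0:ℝ) 1 :=
          ⟨le_min (by linarith [ht₀mem.1]) zero_le_one, min_le_right _ _⟩
        have htgt : t₀ < t := lt_min (by linarith) ht₀lt
        have htd : dist t t₀ < δ := by
          rw [Real.dist_eq, abs_of_nonneg (by linarith)]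
          have := min_le_left (t₀ + δ / 2) 1
          linarith
        have h4 := hδ' htmem htd
        have h5 := hgt t htmem htgt
        have h6 : Metric.infDist (γ t) Uᶜ ≤ Metric.infDist (γ t₀) Uᶜ + dist (γ t) (γ t₀) :=
          Metric.infDist_le_infDist_add_dist
        linarith
    have hd : dist x (γ t₀) ≤ r / 2 := by
      refine le_of_forall_pos_le_add fun ε hε => ?_
      obtain ⟨δ, hδ, hδ'⟩ := hcont₀ ε hε
      obtain ⟨t, htT, htgt⟩ : ∃ t ∈ T, t₀ - δ < t :=
        exists_lt_of_lt_csSup ⟨0, hT0⟩ (by linarith)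
      have htle : t ≤ t₀ := le_csSup hTbdd htT
      have htd : dist t t₀ < δ := by
        rw [Real.dist_eq, abs_of_nonpos (by linarith)]
        linarith
      have h4 := hδ' htT.1 htd
      have h5 := hdists t htT.1
      have h6 := dist_triangle x (γ t) (γ t₀)
      have h7 := htT.2
      linarith
    refine ⟨γ t₀, fun w hw => ?_⟩
    refine ⟨ball_subset_of_le_infDist (le_trans hcc hi) hw, ?_⟩
    rw [mem_ball] at hw ⊢
    have ht1 := dist_triangle w (γ t₀) x
    have ht2 : dist (γ t₀) x = dist x (γ t₀) := dist_comm _ _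
    linarith
end
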